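/- arXiv:2605.20486 — 3 statements merged into one kernel-verified Lean document; each statement's English description precedes it below -/
import Mathlib

section
/- Let C ≥ 1, let (X,d) be a complete C-quasiconvex metric space, and for each n ∈ ℕ let r_n ∈ (0,1] and let d_n be a metric on [0,r_n] such that ([0,r_n],d_n) is C-quasiconvex. Let Q = {q_n : n ∈ ℕ} ⊂ X with the points q_n pairwise distinct, and let Z := {(x,y) ∈ X × [0,1] : y = 0 if x ∉ Q, and y ∈ [0,r_n] if x = q_n}. Define ρ on Z by: ρ((x₁,y₁),(x₂,y₂)) = d_n(y₁,y₂) if x₁ = x₂ = q_n; and otherwise ρ((x₁,y₁),(x₂,y₂)) = λ(x₁,y₁) + d(x₁,x₂) + λ(x₂,y₂), where λ(q_n,y) := d_n(y,0) and λ(x,0) := 0 for x ∉ Q. Then ρ is a metric on Z and (Z,ρ) is C-quasiconvex; if moreover each ([0,r_n],d_n) is complete, then (Z,ρ) is complete. -/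
open Filter Topology Set MeasureTheory
open scoped ENNReal NNReal

attribute [-instance] Subtype.pseudoMetricSpace Subtype.metricSpace

/-- The local (descent) slope of `u` at `x`, relative to the ambient set `A`. -/
noncomputable def locSlopeOn {X : Type*} [PseudoMetricSpace X] (u : X → ℝ) (A : Set X) (x : X) :
    ℝ≥0∞ :=
  Filter.limsup (fun y => ENNReal.ofReal (max (u x - u y) 0 / dist x y)) (𝓝[A \ {x}] x)

/-- The local (descent) slope of `u` at `x`. -/
noncomputable def locSlope {X : Type*} [PseudoMetricSpace X] (u : X → ℝ) (x : X) : ℝ≥0∞ :=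
  locSlopeOn u Set.univ x

/-- The intrinsic (length) distance between two points. -/
noncomputable def intrinsicDist {X : Type*} [PseudoMetricSpace X] (x y : X) : ℝ≥0∞ :=
  ⨅ (T : ℝ) (_ : 0 ≤ T) (γ : ℝ → X) (_ : ContinuousOn γ (Set.Icc 0 T))
    (_ : γ 0 = x) (_ : γ T = y), eVariationOn γ (Set.Icc 0 T)

/-- Compatibility condition (CC). -/
def SatisfiesCC {X : Type*} [PseudoMetricSpace X] (Ω : Set X) (ℓ g : X → ℝ) : Prop :=
  ∀ x ∈ frontier Ω, ∀ y ∈ frontier Ω, ∀ T > (0:ℝ), ∀ γ : ℝ → X,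
    LipschitzOnWith 1 γ (Set.Icc 0 T) → Set.MapsTo γ (Set.Icc 0 T) (closure Ω) →
    γ 0 = y → γ T = x → Set.MapsTo γ (Set.Ioo 0 T) Ω →
    g x - g y ≤ ∫ t in (0:ℝ)..T, ℓ (γ t)

/-- Continuous pointwise solution of the slope eikonal equation. -/
def IsEikonalSol {X : Type*} [PseudoMetricSpace X] (Ω : Set X) (ℓ g u : X → ℝ) : Prop :=
  ContinuousOn u (closure Ω) ∧
  (∀ x ∈ Ω, locSlopeOn u (closure Ω) x = ENNReal.ofReal (ℓ x)) ∧
  ∀ x ∈ frontier Ω, u x = g x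

/-- Eikonal space. -/
def IsEikonalSpace (X : Type*) [MetricSpace X] : Prop :=
  ∀ Ω : Set X, IsOpen Ω → Ω.Nonempty → Ω ≠ Set.univ →
    ∀ ℓ g : X → ℝ, ContinuousOn ℓ Ω → (∃ M, ∀ x ∈ Ω, |ℓ x| ≤ M) →
      (∃ c > 0, ∀ x ∈ Ω, c ≤ ℓ x) → ContinuousOn g (frontier Ω) →
      SatisfiesCC Ω ℓ g → ∃ u : X → ℝ, IsEikonalSol Ω ℓ g u

/-- The `E_{1,0}` property. -/
def HasE10 (X : Type*) [MetricSpace X] : Prop :=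
  ∀ K : Set X, IsClosed K → K.Nonempty →
    ∃ u : X → ℝ, Continuous u ∧ (∀ x ∉ K, locSlope u x = 1) ∧ ∀ x ∈ K, u x = 0

/-- The glued set `Z ⊆ X × ℝ`: the second coordinate is `0` off `Q = range q`, and lies in
`[0, r n]` over `q n`. -/
def Zset {X : Type*} [MetricSpace X] (r : ℕ → ℝ) (q : ℕ → X) : Set (X × ℝ) :=
  {p | (∀ n, p.1 = q n → p.2 ∈ Set.Icc 0 (r n)) ∧ (p.1 ∉ Set.range q → p.2 = 0)}

open Classical in
/-- The "height" `λ` of a point of `Z`: the `d_n`-distance of its fiber coordinate to `0`. -/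
noncomputable def lamZ {X : Type*} [MetricSpace X] (r : ℕ → ℝ) (hr0 : ∀ n, 0 < r n)
    (q : ℕ → X) (D : ∀ n, MetricSpace (Set.Icc (0:ℝ) (r n))) (z : Zset r q) : ℝ :=
  if h : ∃ n, (z : X × ℝ).1 = q n then
    @dist _ (D (Classical.choose h)).toDist
      ⟨(z : X × ℝ).2, z.2.1 _ (Classical.choose_spec h)⟩
      ⟨0, Set.left_mem_Icc.mpr (hr0 _).le⟩
  else 0

open Classical in
/-- The glued distance `ρ` on `Z`. -/
noncomputable def rhoZ {X : Type*} [MetricSpace X] (r : ℕ → ℝ) (hr0 : ∀ n, 0 < r n)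
    (q : ℕ → X) (D : ∀ n, MetricSpace (Set.Icc (0:ℝ) (r n))) (z w : Zset r q) : ℝ :=
  if h : ∃ n, (z : X × ℝ).1 = q n ∧ (w : X × ℝ).1 = q n then
    @dist _ (D (Classical.choose h)).toDist
      ⟨(z : X × ℝ).2, z.2.1 _ (Classical.choose_spec h).1⟩
      ⟨(w : X × ℝ).2, w.2.1 _ (Classical.choose_spec h).2⟩
  else lamZ r hr0 q D z + dist (z : X × ℝ).1 (w : X × ℝ).1 + lamZ r hr0 q D w

/-! ### Auxiliary lemmas about `intrinsicDist` -/

section IntrinsicAux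

variable {A : Type*} [PseudoMetricSpace A]

lemma intrinsicDist_le_eVar {x y : A} {T : ℝ} (hT : 0 ≤ T) {γ : ℝ → A}
    (hγ : ContinuousOn γ (Set.Icc 0 T)) (h0 : γ 0 = x) (h1 : γ T = y) :
    intrinsicDist x y ≤ eVariationOn γ (Set.Icc 0 T) :=
  iInf_le_of_le T <| iInf_le_of_le hT <| iInf_le_of_le γ <| iInf_le_of_le hγ <|
    iInf_le_of_le h0 <| iInf_le_of_le h1 le_rfl

lemma intrinsicDist_self (x : A) : intrinsicDist x x = 0 :=
  le_antisymm
    (le_trans (intrinsicDist_le_eVar le_rfl continuousOn_const rfl rfl)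
      (le_of_eq (eVariationOn.subsingleton _
        (by rw [Set.Icc_self]; exact Set.subsingleton_singleton))))
    zero_le

lemma intrinsicDist_le_of_dist_le {B : Type*} [PseudoMetricSpace B] {f : A → B}
    (hf : ∀ a b, dist (f a) (f b) ≤ dist a b) (x y : A) :
    intrinsicDist (f x) (f y) ≤ intrinsicDist x y := by
  have hl : LipschitzWith 1 f :=
    LipschitzWith.of_dist_le_mul (by
      intro a b
      simp only [NNReal.coe_one, one_mul]
      exact hf a b)
  refine le_iInf fun T => le_iInf fun hT => le_iInf fun γ => le_iInf fun hγ =>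
    le_iInf fun h0 => le_iInf fun h1 => ?_
  refine le_trans (intrinsicDist_le_eVar hT (hl.continuous.comp_continuousOn hγ)
    (by rw [Function.comp_apply, h0]) (by rw [Function.comp_apply, h1])) ?_
  simpa using (hl.lipschitzOnWith (s := Set.univ)).comp_eVariationOn_le (Set.mapsTo_univ γ _)

lemma intrinsicDist_symm_le (x y : A) : intrinsicDist y x ≤ intrinsicDist x y := by
  refine le_iInf fun T => le_iInf fun hT => le_iInf fun γ => le_iInf fun hγ =>
    le_iInf fun h0 => le_iInf fun h1 => ?_
  have hδ : ContinuousOn (fun t => γ (T - t)) (Set.Icc 0 T) :=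
    hγ.comp (continuous_const.sub continuous_id).continuousOn
      (fun t ht => ⟨by show (0:ℝ) ≤ T - t; linarith [ht.2],
        by show T - t ≤ T; linarith [ht.1]⟩)
  refine (intrinsicDist_le_eVar hT hδ (by simp only [sub_zero]; exact h1)
    (by simp only [sub_self]; exact h0)).trans ?_
  exact eVariationOn.comp_le_of_antitoneOn γ (fun t => T - t)
    (fun a _ b _ hab => by show T - b ≤ T - a; linarith)
    (fun t ht => ⟨by show (0:ℝ) ≤ T - t; linarith [ht.2],
      by show T - t ≤ T; linarith [ht.1]⟩)

lemma intrinsicDist_le_concat {x y z : A} {T1 T2 : ℝ} (hT1 : 0 ≤ T1) (hT2 : 0 ≤ T2)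
    {γ1 γ2 : ℝ → A} (hγ1 : ContinuousOn γ1 (Set.Icc 0 T1))
    (hγ2 : ContinuousOn γ2 (Set.Icc 0 T2))
    (h10 : γ1 0 = x) (h11 : γ1 T1 = y) (h20 : γ2 0 = y) (h21 : γ2 T2 = z) :
    intrinsicDist x z ≤ eVariationOn γ1 (Set.Icc 0 T1) + eVariationOn γ2 (Set.Icc 0 T2) := by
  set γ : ℝ → A := fun t => if t ≤ T1 then γ1 t else γ2 (t - T1) with hγdef
  have key1 : Set.EqOn γ γ1 (Set.Icc 0 T1) := fun t ht => if_pos ht.2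
  have key2 : Set.EqOn γ (fun t => γ2 (t - T1)) (Set.Icc T1 (T1 + T2)) := by
    intro t ht
    rcases eq_or_lt_of_le ht.1 with h | h
    · simp only [hγdef]
      rw [if_pos h.ge, ← h, h11, sub_self, h20]
    · exact if_neg (not_le.2 h)
  have hle : T1 ≤ T1 + T2 := le_add_of_nonneg_right hT2
  have hc1 : ContinuousOn γ (Set.Icc 0 T1) := hγ1.congr key1
  have hc2 : ContinuousOn γ (Set.Icc T1 (T1 + T2)) := by
    refine ContinuousOn.congr ?_ key2
    exact hγ2.comp (continuous_sub_right T1).continuousOn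
      (fun t ht => ⟨by show (0:ℝ) ≤ t - T1; linarith [ht.1],
        by show t - T1 ≤ T2; linarith [ht.2]⟩)
  have hcont : ContinuousOn γ (Set.Icc 0 (T1 + T2)) := by
    rw [← Set.Icc_union_Icc_eq_Icc hT1 hle]
    intro t ht
    apply ContinuousWithinAt.union
    · by_cases h : t ∈ Set.Icc (0 : ℝ) T1
      · exact hc1 t h
      · exact continuousWithinAt_of_notMem_closure (by rwa [isClosed_Icc.closure_eq])
    · by_cases h : t ∈ Set.Icc T1 (T1 + T2)
      · exact hc2 t h
      · exact continuousWithinAt_of_notMem_closure (by rwa [isClosed_Icc.closure_eq])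
  have hsplit := eVariationOn.Icc_add_Icc γ (s := Set.univ) hT1 hle (Set.mem_univ T1)
  simp only [Set.univ_inter] at hsplit
  have e1 : eVariationOn γ (Set.Icc 0 T1) = eVariationOn γ1 (Set.Icc 0 T1) :=
    eVariationOn.eq_of_eqOn key1
  have e2 : eVariationOn γ (Set.Icc T1 (T1 + T2)) ≤ eVariationOn γ2 (Set.Icc 0 T2) := by
    rw [eVariationOn.eq_of_eqOn key2]
    exact eVariationOn.comp_le_of_monotoneOn γ2 (fun t => t - T1)
      (fun a _ b _ hab => by show a - T1 ≤ b - T1; linarith)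
      (fun t ht => ⟨by show (0:ℝ) ≤ t - T1; linarith [ht.1],
        by show t - T1 ≤ T2; linarith [ht.2]⟩)
  have hstart : γ 0 = x := by simp only [hγdef]; rw [if_pos hT1]; exact h10
  have hend : γ (T1 + T2) = z := by
    by_cases hc : T1 + T2 ≤ T1
    · have h2 : T2 = 0 := le_antisymm (by linarith) hT2
      simp only [hγdef]
      rw [if_pos hc, h2, add_zero, h11, ← h21, h2, h20]
    · simp only [hγdef]
      rw [if_neg hc, add_sub_cancel_left, h21]
  calc intrinsicDist x z ≤ eVariationOn γ (Set.Icc 0 (T1 + T2)) :=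
        intrinsicDist_le_eVar (by linarith) hcont hstart hend
    _ = eVariationOn γ (Set.Icc 0 T1) + eVariationOn γ (Set.Icc T1 (T1 + T2)) := hsplit.symm
    _ ≤ eVariationOn γ1 (Set.Icc 0 T1) + eVariationOn γ2 (Set.Icc 0 T2) := by
        rw [e1]; exact add_le_add_right e2 _

lemma intrinsicDist_triangle (x y z : A) :
    intrinsicDist x z ≤ intrinsicDist x y + intrinsicDist y z := by
  refine ENNReal.le_of_forall_pos_le_add fun ε hε htop => ?_
  have h1top : intrinsicDist x y ≠ ⊤ := (lt_of_le_of_lt le_self_add htop).ne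
  have h2top : intrinsicDist y z ≠ ⊤ := (lt_of_le_of_lt le_add_self htop).ne
  have hε2 : ((ε / 2 : ℝ≥0) : ℝ≥0∞) ≠ 0 := by
    exact_mod_cast (half_pos (show (0:ℝ≥0) < ε from hε)).ne'
  have h1 : intrinsicDist x y < intrinsicDist x y + (ε / 2 : ℝ≥0) :=
    ENNReal.lt_add_right h1top hε2
  have h2 : intrinsicDist y z < intrinsicDist y z + (ε / 2 : ℝ≥0) :=
    ENNReal.lt_add_right h2top hε2
  conv_lhs at h1 => rw [intrinsicDist]
  conv_lhs at h2 => rw [intrinsicDist]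
  simp only [iInf_lt_iff] at h1 h2
  obtain ⟨T1, hT1, γ1, hγ1, h10, h11, hv1⟩ := h1
  obtain ⟨T2, hT2, γ2, hγ2, h20, h21, hv2⟩ := h2
  calc intrinsicDist x z ≤ eVariationOn γ1 (Set.Icc 0 T1) + eVariationOn γ2 (Set.Icc 0 T2) :=
        intrinsicDist_le_concat hT1 hT2 hγ1 hγ2 h10 h11 h20 h21
    _ ≤ (intrinsicDist x y + (ε / 2 : ℝ≥0)) + (intrinsicDist y z + (ε / 2 : ℝ≥0)) :=
        add_le_add hv1.le hv2.le
    _ = intrinsicDist x y + intrinsicDist y z + ε := by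
        rw [add_add_add_comm, ← ENNReal.coe_add, add_halves]

end IntrinsicAux

/-! ### Auxiliary lemmas about `lamZ` and `rhoZ` -/

section ZAux

variable {X : Type*} [MetricSpace X]

lemma lamZ_eq (r : ℕ → ℝ) (hr0 : ∀ n, 0 < r n) (q : ℕ → X) (hq : Function.Injective q)
    (D : ∀ n, MetricSpace (Set.Icc (0:ℝ) (r n))) (z : Zset r q) {n : ℕ}
    (hn : (z : X × ℝ).1 = q n) :
    lamZ r hr0 q D z = @dist _ (D n).toDist
      ⟨(z : X × ℝ).2, z.2.1 n hn⟩ ⟨0, Set.left_mem_Icc.mpr (hr0 n).le⟩ := by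
  have h : ∃ m, (z : X × ℝ).1 = q m := ⟨n, hn⟩
  rw [lamZ, dif_pos h]
  obtain rfl : n = Classical.choose h := hq (hn.symm.trans (Classical.choose_spec h))
  rfl

lemma lamZ_nonneg (r : ℕ → ℝ) (hr0 : ∀ n, 0 < r n) (q : ℕ → X)
    (D : ∀ n, MetricSpace (Set.Icc (0:ℝ) (r n))) (z : Zset r q) :
    0 ≤ lamZ r hr0 q D z := by
  rw [lamZ]
  split_ifs with h
  · exact @dist_nonneg _ (D (Classical.choose h)).toPseudoMetricSpace _ _
  · exact le_rfl

lemma lamZ_base (r : ℕ → ℝ) (hr0 : ∀ n, 0 < r n) (q : ℕ → X)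
    (D : ∀ n, MetricSpace (Set.Icc (0:ℝ) (r n))) (z : Zset r q)
    (h : ¬ ∃ m, (z : X × ℝ).1 = q m) : lamZ r hr0 q D z = 0 := by
  rw [lamZ, dif_neg h]

lemma lamZ_zero (r : ℕ → ℝ) (hr0 : ∀ n, 0 < r n) (q : ℕ → X)
    (D : ∀ n, MetricSpace (Set.Icc (0:ℝ) (r n))) (z : Zset r q)
    (h0 : (z : X × ℝ).2 = 0) : lamZ r hr0 q D z = 0 := by
  rw [lamZ]
  split_ifs with h
  · have : (⟨(z : X × ℝ).2, z.2.1 _ (Classical.choose_spec h)⟩ :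
        Set.Icc (0:ℝ) (r (Classical.choose h)))
        = ⟨0, Set.left_mem_Icc.mpr (hr0 _).le⟩ := Subtype.ext h0
    rw [this]
    exact @dist_self _ (D (Classical.choose h)).toPseudoMetricSpace _
  · rfl

lemma rhoZ_fiber (r : ℕ → ℝ) (hr0 : ∀ n, 0 < r n) (q : ℕ → X) (hq : Function.Injective q)
    (D : ∀ n, MetricSpace (Set.Icc (0:ℝ) (r n))) (z w : Zset r q) {n : ℕ}
    (hz : (z : X × ℝ).1 = q n) (hw : (w : X × ℝ).1 = q n) :
    rhoZ r hr0 q D z w = @dist _ (D n).toDist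
      ⟨(z : X × ℝ).2, z.2.1 n hz⟩ ⟨(w : X × ℝ).2, w.2.1 n hw⟩ := by
  have h : ∃ m, (z : X × ℝ).1 = q m ∧ (w : X × ℝ).1 = q m := ⟨n, hz, hw⟩
  rw [rhoZ, dif_pos h]
  obtain rfl : n = Classical.choose h := hq (hz.symm.trans (Classical.choose_spec h).1)
  rfl

lemma rhoZ_base (r : ℕ → ℝ) (hr0 : ∀ n, 0 < r n) (q : ℕ → X)
    (D : ∀ n, MetricSpace (Set.Icc (0:ℝ) (r n))) (z w : Zset r q)
    (h : ¬ ∃ n, (z : X × ℝ).1 = q n ∧ (w : X × ℝ).1 = q n) :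
    rhoZ r hr0 q D z w =
      lamZ r hr0 q D z + dist (z : X × ℝ).1 (w : X × ℝ).1 + lamZ r hr0 q D w := by
  rw [rhoZ, dif_neg h]

lemma dist_fiber_le (r : ℕ → ℝ) (hr0 : ∀ n, 0 < r n) (q : ℕ → X) (hq : Function.Injective q)
    (D : ∀ n, MetricSpace (Set.Icc (0:ℝ) (r n))) (z w : Zset r q) {n : ℕ}
    (hz : (z : X × ℝ).1 = q n) (hw : (w : X × ℝ).1 = q n) :
    @dist _ (D n).toDist ⟨(z : X × ℝ).2, z.2.1 n hz⟩ ⟨(w : X × ℝ).2, w.2.1 n hw⟩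
      ≤ lamZ r hr0 q D z + lamZ r hr0 q D w := by
  rw [lamZ_eq r hr0 q hq D z hz, lamZ_eq r hr0 q hq D w hw]
  exact @dist_triangle_right _ (D n).toPseudoMetricSpace _ _ _

lemma lam_le_fiber (r : ℕ → ℝ) (hr0 : ∀ n, 0 < r n) (q : ℕ → X) (hq : Function.Injective q)
    (D : ∀ n, MetricSpace (Set.Icc (0:ℝ) (r n))) (z v : Zset r q) {n : ℕ}
    (hz : (z : X × ℝ).1 = q n) (hv : (v : X × ℝ).1 = q n) :
    lamZ r hr0 q D z ≤
      @dist _ (D n).toDist ⟨(z : X × ℝ).2, z.2.1 n hz⟩ ⟨(v : X × ℝ).2, v.2.1 n hv⟩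
        + lamZ r hr0 q D v := by
  rw [lamZ_eq r hr0 q hq D z hz, lamZ_eq r hr0 q hq D v hv]
  exact @dist_triangle _ (D n).toPseudoMetricSpace _ _ _

lemma dist_proj_le (r : ℕ → ℝ) (hr0 : ∀ n, 0 < r n) (q : ℕ → X) (hq : Function.Injective q)
    (D : ∀ n, MetricSpace (Set.Icc (0:ℝ) (r n))) (z w : Zset r q) :
    dist (z : X × ℝ).1 (w : X × ℝ).1 ≤ rhoZ r hr0 q D z w := by
  by_cases h : ∃ n, (z : X × ℝ).1 = q n ∧ (w : X × ℝ).1 = q n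
  · obtain ⟨n, hz, hw⟩ := h
    have h0 : dist (z : X × ℝ).1 (w : X × ℝ).1 = 0 := by rw [hz, hw, dist_self]
    rw [h0, rhoZ_fiber r hr0 q hq D z w hz hw]
    exact @dist_nonneg _ (D n).toPseudoMetricSpace _ _
  · rw [rhoZ_base r hr0 q D z w h]
    have l1 := lamZ_nonneg r hr0 q D z
    have l2 := lamZ_nonneg r hr0 q D w
    linarith

lemma abs_lam_sub_le (r : ℕ → ℝ) (hr0 : ∀ n, 0 < r n) (q : ℕ → X) (hq : Function.Injective q)
    (D : ∀ n, MetricSpace (Set.Icc (0:ℝ) (r n))) (z w : Zset r q) :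
    |lamZ r hr0 q D z - lamZ r hr0 q D w| ≤ rhoZ r hr0 q D z w := by
  by_cases h : ∃ n, (z : X × ℝ).1 = q n ∧ (w : X × ℝ).1 = q n
  · obtain ⟨n, hz, hw⟩ := h
    rw [rhoZ_fiber r hr0 q hq D z w hz hw, lamZ_eq r hr0 q hq D z hz,
      lamZ_eq r hr0 q hq D w hw]
    exact @abs_dist_sub_le _ (D n).toPseudoMetricSpace _ _ _
  · rw [rhoZ_base r hr0 q D z w h]
    have l1 := lamZ_nonneg r hr0 q D z
    have l2 := lamZ_nonneg r hr0 q D w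
    have d0 : (0:ℝ) ≤ dist (z : X × ℝ).1 (w : X × ℝ).1 := dist_nonneg
    rw [abs_sub_le_iff]
    constructor <;> linarith

/-- The glued metric space structure on `Zset r q`. -/
noncomputable def Mzed (r : ℕ → ℝ) (hr0 : ∀ n, 0 < r n) (q : ℕ → X)
    (hq : Function.Injective q) (D : ∀ n, MetricSpace (Set.Icc (0:ℝ) (r n))) :
    MetricSpace (Zset r q) where
  dist := rhoZ r hr0 q D
  dist_self z := by
    show rhoZ r hr0 q D z z = 0
    by_cases h : ∃ n, (z : X × ℝ).1 = q n
    · obtain ⟨n, hz⟩ := h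
      rw [rhoZ_fiber r hr0 q hq D z z hz hz]
      exact @dist_self _ (D n).toPseudoMetricSpace _
    · rw [rhoZ_base r hr0 q D z z (by rintro ⟨n, h1, -⟩; exact h ⟨n, h1⟩), dist_self,
        lamZ_base r hr0 q D z h]
      ring
  dist_comm z w := by
    show rhoZ r hr0 q D z w = rhoZ r hr0 q D w z
    by_cases h : ∃ n, (z : X × ℝ).1 = q n ∧ (w : X × ℝ).1 = q n
    · obtain ⟨n, hz, hw⟩ := h
      rw [rhoZ_fiber r hr0 q hq D z w hz hw, rhoZ_fiber r hr0 q hq D w z hw hz]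
      exact @dist_comm _ (D n).toPseudoMetricSpace _ _
    · have h' : ¬ ∃ n, (w : X × ℝ).1 = q n ∧ (z : X × ℝ).1 = q n := by
        rintro ⟨n, h1, h2⟩; exact h ⟨n, h2, h1⟩
      rw [rhoZ_base r hr0 q D z w h, rhoZ_base r hr0 q D w z h', dist_comm]
      ring
  dist_triangle z v w := by
    show rhoZ r hr0 q D z w ≤ rhoZ r hr0 q D z v + rhoZ r hr0 q D v w
    by_cases hzw : ∃ n, (z : X × ℝ).1 = q n ∧ (w : X × ℝ).1 = q n
    · obtain ⟨n, hz, hw⟩ := hzw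
      rw [rhoZ_fiber r hr0 q hq D z w hz hw]
      by_cases hv : (v : X × ℝ).1 = q n
      · rw [rhoZ_fiber r hr0 q hq D z v hz hv, rhoZ_fiber r hr0 q hq D v w hv hw]
        exact @dist_triangle _ (D n).toPseudoMetricSpace _ _ _
      · have h1 : ¬ ∃ m, (z : X × ℝ).1 = q m ∧ (v : X × ℝ).1 = q m := by
          rintro ⟨m, ha, hb⟩
          obtain rfl : m = n := hq (ha.symm.trans hz)
          exact hv hb
        have h2 : ¬ ∃ m, (v : X × ℝ).1 = q m ∧ (w : X × ℝ).1 = q m := by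
          rintro ⟨m, ha, hb⟩
          obtain rfl : m = n := hq (hb.symm.trans hw)
          exact hv ha
        rw [rhoZ_base r hr0 q D z v h1, rhoZ_base r hr0 q D v w h2]
        have hb := dist_fiber_le r hr0 q hq D z w hz hw
        have l1 := lamZ_nonneg r hr0 q D v
        have d1 : (0:ℝ) ≤ dist (z : X × ℝ).1 (v : X × ℝ).1 := dist_nonneg
        have d2 : (0:ℝ) ≤ dist (v : X × ℝ).1 (w : X × ℝ).1 := dist_nonneg
        linarith
    · rw [rhoZ_base r hr0 q D z w hzw]
      by_cases hzv : ∃ n, (z : X × ℝ).1 = q n ∧ (v : X × ℝ).1 = q n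
      · obtain ⟨n, hz, hv⟩ := hzv
        have hvw : ¬ ∃ m, (v : X × ℝ).1 = q m ∧ (w : X × ℝ).1 = q m := by
          rintro ⟨m, ha, hb⟩
          obtain rfl : m = n := hq (ha.symm.trans hv)
          exact hzw ⟨m, hz, hb⟩
        rw [rhoZ_fiber r hr0 q hq D z v hz hv, rhoZ_base r hr0 q D v w hvw]
        have key := lam_le_fiber r hr0 q hq D z v hz hv
        have hd : dist (z : X × ℝ).1 (w : X × ℝ).1 = dist (v : X × ℝ).1 (w : X × ℝ).1 := by
          rw [hz, hv]
        linarith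
      · by_cases hvw : ∃ n, (v : X × ℝ).1 = q n ∧ (w : X × ℝ).1 = q n
        · obtain ⟨n, hv, hw⟩ := hvw
          rw [rhoZ_base r hr0 q D z v hzv, rhoZ_fiber r hr0 q hq D v w hv hw]
          have key := lam_le_fiber r hr0 q hq D w v hw hv
          have hcomm : @dist _ (D n).toDist ⟨(w : X × ℝ).2, w.2.1 n hw⟩
              ⟨(v : X × ℝ).2, v.2.1 n hv⟩ = @dist _ (D n).toDist
              ⟨(v : X × ℝ).2, v.2.1 n hv⟩ ⟨(w : X × ℝ).2, w.2.1 n hw⟩ :=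
            @dist_comm _ (D n).toPseudoMetricSpace _ _
          rw [hcomm] at key
          have hd : dist (z : X × ℝ).1 (w : X × ℝ).1 = dist (z : X × ℝ).1 (v : X × ℝ).1 := by
            rw [hw, hv]
          linarith
        · rw [rhoZ_base r hr0 q D z v hzv, rhoZ_base r hr0 q D v w hvw]
          have tri := dist_triangle (z : X × ℝ).1 (v : X × ℝ).1 (w : X × ℝ).1
          have l1 := lamZ_nonneg r hr0 q D v
          linarith
  eq_of_dist_eq_zero := by
    intro z w h
    replace h : rhoZ r hr0 q D z w = 0 := h
    by_cases hzw : ∃ n, (z : X × ℝ).1 = q n ∧ (w : X × ℝ).1 = q n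
    · obtain ⟨n, hz, hw⟩ := hzw
      rw [rhoZ_fiber r hr0 q hq D z w hz hw] at h
      have h2 : (z : X × ℝ).2 = (w : X × ℝ).2 :=
        congrArg Subtype.val (@eq_of_dist_eq_zero _ (D n) _ _ h)
      exact Subtype.ext (Prod.ext (hz.trans hw.symm) h2)
    · rw [rhoZ_base r hr0 q D z w hzw] at h
      have l1 := lamZ_nonneg r hr0 q D z
      have l2 := lamZ_nonneg r hr0 q D w
      have d0 : (0:ℝ) ≤ dist (z : X × ℝ).1 (w : X × ℝ).1 := dist_nonneg
      have hd : dist (z : X × ℝ).1 (w : X × ℝ).1 = 0 := by linarith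
      have h1 : (z : X × ℝ).1 = (w : X × ℝ).1 := eq_of_dist_eq_zero hd
      have hz1 : (z : X × ℝ).1 ∉ Set.range q := by
        rintro ⟨n, hn⟩
        exact hzw ⟨n, hn.symm, h1.symm.trans hn.symm⟩
      have hz2 : (z : X × ℝ).2 = 0 := z.2.2 hz1
      have hw1 : (w : X × ℝ).1 ∉ Set.range q := by rwa [← h1]
      have hw2 : (w : X × ℝ).2 = 0 := w.2.2 hw1
      exact Subtype.ext (Prod.ext h1 (hz2.trans hw2.symm))

/-- The embedding of the base `X` into `Z`. -/
def eXmap (r : ℕ → ℝ) (hr0 : ∀ n, 0 < r n) (q : ℕ → X) (x : X) : Zset r q :=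
  ⟨(x, 0), fun n _ => Set.left_mem_Icc.mpr (hr0 n).le, fun _ => rfl⟩

/-- The embedding of a fiber `[0, r n]` into `Z`. -/
def eFmap (r : ℕ → ℝ) (q : ℕ → X) (hq : Function.Injective q) (n : ℕ)
    (y : Set.Icc (0:ℝ) (r n)) : Zset r q :=
  ⟨(q n, y), fun m hm => by obtain rfl : n = m := hq hm; exact y.2,
    fun h => absurd ⟨n, rfl⟩ h⟩

lemma rhoZ_eX (r : ℕ → ℝ) (hr0 : ∀ n, 0 < r n) (q : ℕ → X) (hq : Function.Injective q)
    (D : ∀ n, MetricSpace (Set.Icc (0:ℝ) (r n))) (a b : X) :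
    rhoZ r hr0 q D (eXmap r hr0 q a) (eXmap r hr0 q b) = dist a b := by
  by_cases h : ∃ n, a = q n ∧ b = q n
  · obtain ⟨n, ha, hb⟩ := h
    rw [rhoZ_fiber r hr0 q hq D _ _
      (show ((eXmap r hr0 q a : X × ℝ)).1 = q n from ha)
      (show ((eXmap r hr0 q b : X × ℝ)).1 = q n from hb)]
    obtain rfl : a = b := ha.trans hb.symm
    have h1 : dist a a = 0 := dist_self a
    rw [h1]
    exact @dist_self _ (D n).toPseudoMetricSpace _
  · rw [rhoZ_base r hr0 q D _ _ h, lamZ_zero r hr0 q D _ rfl, lamZ_zero r hr0 q D _ rfl]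
    show 0 + dist a b + 0 = dist a b
    ring
lemma rhoZ_eF (r : ℕ → ℝ) (hr0 : ∀ n, 0 < r n) (q : ℕ → X) (hq : Function.Injective q)
    (D : ∀ n, MetricSpace (Set.Icc (0:ℝ) (r n))) (n : ℕ) (a b : Set.Icc (0:ℝ) (r n)) :
    rhoZ r hr0 q D (eFmap r q hq n a) (eFmap r q hq n b) = @dist _ (D n).toDist a b := by
  rw [rhoZ_fiber r hr0 q hq D _ _
    (show ((eFmap r q hq n a : X × ℝ)).1 = q n from rfl)
    (show ((eFmap r q hq n b : X × ℝ)).1 = q n from rfl)]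
  exact congrArg₂ (@dist _ (D n).toDist) (Subtype.ext rfl) (Subtype.ext rfl)

lemma eF_eq (r : ℕ → ℝ) (q : ℕ → X) (hq : Function.Injective q) (z : Zset r q) {n : ℕ}
    (hz : (z : X × ℝ).1 = q n) :
    z = eFmap r q hq n ⟨(z : X × ℝ).2, z.2.1 n hz⟩ :=
  Subtype.ext (Prod.ext hz rfl)

lemma eX_eq (r : ℕ → ℝ) (hr0 : ∀ n, 0 < r n) (q : ℕ → X) (z : Zset r q)
    (h : (z : X × ℝ).2 = 0) : z = eXmap r hr0 q (z : X × ℝ).1 :=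
  Subtype.ext (Prod.ext rfl h)

end ZAux

/-- **gluing lemma.** Gluing `C`-quasiconvex segments `([0,r_n], d_n)` to a
complete `C`-quasiconvex space `X` along a countable set `Q = {q_n}` produces a metric space
`(Z,ρ)` which is again `C`-quasiconvex, and complete if each `([0,r_n], d_n)` is complete. -/
theorem stmt13 {X : Type*} [MetricSpace X] [CompleteSpace X] (C : ℝ) (hC : 1 ≤ C)
    (hX : ∀ x y : X, intrinsicDist x y ≤ ENNReal.ofReal (C * dist x y))
    (r : ℕ → ℝ) (hr0 : ∀ n, 0 < r n) (hr1 : ∀ n, r n ≤ 1)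
    (D : ∀ n, MetricSpace (Set.Icc (0:ℝ) (r n)))
    (hD : ∀ n, ∀ a b : Set.Icc (0:ℝ) (r n),
      @intrinsicDist _ (D n).toPseudoMetricSpace a b
        ≤ ENNReal.ofReal (C * @dist _ (D n).toDist a b))
    (q : ℕ → X) (hq : Function.Injective q) :
    ∃ M : MetricSpace (Zset r q),
      (∀ z w : Zset r q, @dist _ M.toDist z w = rhoZ r hr0 q D z w) ∧
      (∀ z w : Zset r q,
        @intrinsicDist _ M.toPseudoMetricSpace z w
          ≤ ENNReal.ofReal (C * rhoZ r hr0 q D z w)) ∧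
      ((∀ n, @CompleteSpace _ (D n).toUniformSpace) →
        @CompleteSpace _ M.toUniformSpace) := by
  classical
  letI M := Mzed r hr0 q hq D
  have hdist : ∀ z w : Zset r q, dist z w = rhoZ r hr0 q D z w := fun _ _ => rfl
  refine ⟨M, fun z w => rfl, ?_, ?_⟩
  · -- quasiconvexity
    intro z w
    by_cases h : ∃ n, (z : X × ℝ).1 = q n ∧ (w : X × ℝ).1 = q n
    · obtain ⟨n, hz, hw⟩ := h
      rw [rhoZ_fiber r hr0 q hq D z w hz hw]
      have hemb : ∀ a b : Set.Icc (0:ℝ) (r n),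
          dist (eFmap r q hq n a) (eFmap r q hq n b) ≤ @dist _ (D n).toDist a b :=
        fun a b => le_of_eq (rhoZ_eF r hr0 q hq D n a b)
      have hpush := @intrinsicDist_le_of_dist_le _ (D n).toPseudoMetricSpace _
        M.toPseudoMetricSpace _ hemb ⟨(z : X × ℝ).2, z.2.1 n hz⟩ ⟨(w : X × ℝ).2, w.2.1 n hw⟩
      rw [← eF_eq r q hq z hz, ← eF_eq r q hq w hw] at hpush
      exact hpush.trans (hD n _ _)
    · rw [rhoZ_base r hr0 q D z w h]
      have t1 : intrinsicDist z w ≤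
          intrinsicDist z (eXmap r hr0 q (z : X × ℝ).1)
            + (intrinsicDist (eXmap r hr0 q (z : X × ℝ).1) (eXmap r hr0 q (w : X × ℝ).1)
              + intrinsicDist (eXmap r hr0 q (w : X × ℝ).1) w) :=
        (intrinsicDist_triangle z (eXmap r hr0 q (z : X × ℝ).1) w).trans
          (add_le_add_right
            (intrinsicDist_triangle (eXmap r hr0 q (z : X × ℝ).1)
              (eXmap r hr0 q (w : X × ℝ).1) w) _)
      have bound : ∀ v : Zset r q, intrinsicDist v (eXmap r hr0 q (v : X × ℝ).1) ≤
          ENNReal.ofReal (C * lamZ r hr0 q D v) := by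
        intro v
        by_cases hv : ∃ m, (v : X × ℝ).1 = q m
        · obtain ⟨m, hm⟩ := hv
          have hv' : v = eFmap r q hq m ⟨(v : X × ℝ).2, v.2.1 m hm⟩ := eF_eq r q hq v hm
          have hx' : eXmap r hr0 q (v : X × ℝ).1
              = eFmap r q hq m ⟨0, Set.left_mem_Icc.mpr (hr0 m).le⟩ :=
            Subtype.ext (Prod.ext hm rfl)
          calc intrinsicDist v (eXmap r hr0 q (v : X × ℝ).1)
              = intrinsicDist (eFmap r q hq m ⟨(v : X × ℝ).2, v.2.1 m hm⟩)
                  (eFmap r q hq m ⟨0, Set.left_mem_Icc.mpr (hr0 m).le⟩) := by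
                rw [← hv', ← hx']
            _ ≤ @intrinsicDist _ (D m).toPseudoMetricSpace
                  ⟨(v : X × ℝ).2, v.2.1 m hm⟩ ⟨0, Set.left_mem_Icc.mpr (hr0 m).le⟩ :=
                @intrinsicDist_le_of_dist_le _ (D m).toPseudoMetricSpace _
                  M.toPseudoMetricSpace _
                  (fun a b => le_of_eq (rhoZ_eF r hr0 q hq D m a b)) _ _
            _ ≤ ENNReal.ofReal (C * @dist _ (D m).toDist
                  ⟨(v : X × ℝ).2, v.2.1 m hm⟩ ⟨0, Set.left_mem_Icc.mpr (hr0 m).le⟩) :=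
                hD m _ _
            _ = ENNReal.ofReal (C * lamZ r hr0 q D v) := by
                rw [lamZ_eq r hr0 q hq D v hm]
        · have h0 : (v : X × ℝ).2 = 0 := v.2.2 (by rintro ⟨m, hm⟩; exact hv ⟨m, hm.symm⟩)
          rw [← eX_eq r hr0 q v h0, intrinsicDist_self]
          exact zero_le
      have bound2 : ∀ v : Zset r q, intrinsicDist (eXmap r hr0 q (v : X × ℝ).1) v ≤
          ENNReal.ofReal (C * lamZ r hr0 q D v) :=
        fun v => (intrinsicDist_symm_le _ _).trans (bound v)
      have boundmid : intrinsicDist (eXmap r hr0 q (z : X × ℝ).1)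
          (eXmap r hr0 q (w : X × ℝ).1) ≤
            ENNReal.ofReal (C * dist (z : X × ℝ).1 (w : X × ℝ).1) :=
        (intrinsicDist_le_of_dist_le
          (fun a b => le_of_eq (rhoZ_eX r hr0 q hq D a b)) _ _).trans (hX _ _)
      have hC0 : (0:ℝ) ≤ C := le_trans zero_le_one hC
      have l1 := lamZ_nonneg r hr0 q D z
      have l2 := lamZ_nonneg r hr0 q D w
      have d0 : (0:ℝ) ≤ dist (z : X × ℝ).1 (w : X × ℝ).1 := dist_nonneg
      calc intrinsicDist z w
          ≤ ENNReal.ofReal (C * lamZ r hr0 q D z)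
              + (ENNReal.ofReal (C * dist (z : X × ℝ).1 (w : X × ℝ).1)
                + ENNReal.ofReal (C * lamZ r hr0 q D w)) :=
            t1.trans (add_le_add (bound z) (add_le_add boundmid (bound2 w)))
        _ = ENNReal.ofReal (C * (lamZ r hr0 q D z + dist (z : X × ℝ).1 (w : X × ℝ).1
              + lamZ r hr0 q D w)) := by
            rw [← ENNReal.ofReal_add (mul_nonneg hC0 d0) (mul_nonneg hC0 l2),
              ← ENNReal.ofReal_add (mul_nonneg hC0 l1)
                (add_nonneg (mul_nonneg hC0 d0) (mul_nonneg hC0 l2))]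
            congr 1
            ring
  · -- completeness
    intro hcomp
    refine @Metric.complete_of_cauchySeq_tendsto _ M.toPseudoMetricSpace ?_
    intro u hu
    rw [Metric.cauchySeq_iff] at hu
    simp only [hdist] at hu
    by_cases hfib : ∃ n N, ∀ k, N ≤ k → (u k : X × ℝ).1 = q n
    · obtain ⟨n, N, hN⟩ := hfib
      set v : ℕ → Set.Icc (0:ℝ) (r n) := fun k =>
        ⟨(u (N + k) : X × ℝ).2, (u (N + k)).2.1 n (hN _ (Nat.le_add_right N k))⟩ with hv
      have hvC : @CauchySeq _ ℕ (D n).toUniformSpace _ v := by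
        refine (@Metric.cauchySeq_iff _ ℕ (D n).toPseudoMetricSpace _ _ v).2 ?_
        intro ε hε
        obtain ⟨K, hK⟩ := hu ε hε
        refine ⟨K, fun k hk l hl => ?_⟩
        have h1 := hK (N + k) (le_trans hk (Nat.le_add_left k N))
          (N + l) (le_trans hl (Nat.le_add_left l N))
        rwa [rhoZ_fiber r hr0 q hq D _ _ (hN _ (Nat.le_add_right N k))
          (hN _ (Nat.le_add_right N l))] at h1
      obtain ⟨y, hy⟩ := @cauchySeq_tendsto_of_complete _ ℕ (D n).toUniformSpace _
        (hcomp n) v hvC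
      refine ⟨eFmap r q hq n y, ?_⟩
      rw [Metric.tendsto_atTop]
      intro ε hε
      have hy' := (@Metric.tendsto_atTop _ ℕ (D n).toPseudoMetricSpace _ _ v y).1 hy
      obtain ⟨K, hK⟩ := hy' ε hε
      refine ⟨N + K, fun k hk => ?_⟩
      have hkN : N ≤ k := le_trans (Nat.le_add_right N K) hk
      have h1 : (u k : X × ℝ).1 = q n := hN k hkN
      rw [hdist, rhoZ_fiber r hr0 q hq D _ _ h1
        (show ((eFmap r q hq n y : X × ℝ)).1 = q n from rfl)]
      have hkk : N + (k - N) = k := by omega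
      have hvk : (⟨(u k : X × ℝ).2, (u k).2.1 n h1⟩ : Set.Icc (0:ℝ) (r n)) = v (k - N) :=
        Subtype.ext (by simp only [hv]; rw [hkk])
      rw [hvk]
      exact hK (k - N) (by omega)
    · push_neg at hfib
      have hprojC : CauchySeq (fun k => (u k : X × ℝ).1) := by
        rw [Metric.cauchySeq_iff]
        intro ε hε
        obtain ⟨K, hK⟩ := hu ε hε
        exact ⟨K, fun k hk l hl =>
          lt_of_le_of_lt (dist_proj_le r hr0 q hq D _ _) (hK k hk l hl)⟩
      obtain ⟨x, hx⟩ := cauchySeq_tendsto_of_complete hprojC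
      have hlamC : CauchySeq (fun k => lamZ r hr0 q D (u k)) := by
        rw [Metric.cauchySeq_iff]
        intro ε hε
        obtain ⟨K, hK⟩ := hu ε hε
        refine ⟨K, fun k hk l hl => ?_⟩
        calc dist (lamZ r hr0 q D (u k)) (lamZ r hr0 q D (u l))
            = |lamZ r hr0 q D (u k) - lamZ r hr0 q D (u l)| := Real.dist_eq _ _
          _ ≤ rhoZ r hr0 q D (u k) (u l) := abs_lam_sub_le r hr0 q hq D _ _
          _ < ε := hK k hk l hl
      obtain ⟨L, hL⟩ := cauchySeq_tendsto_of_complete hlamC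
      have hLnn : 0 ≤ L :=
        ge_of_tendsto hL (Filter.Eventually.of_forall fun k => lamZ_nonneg r hr0 q D (u k))
      have hL0 : L = 0 := by
        by_contra hne
        have hLpos : 0 < L := lt_of_le_of_ne hLnn (Ne.symm hne)
        have h1 : ∀ᶠ k in atTop, L / 2 < lamZ r hr0 q D (u k) :=
          hL.eventually (eventually_gt_nhds (by linarith))
        rw [eventually_atTop] at h1
        obtain ⟨N1, hN1⟩ := h1
        obtain ⟨N2, hN2⟩ := hu (L / 2) (by linarith)
        set N := max N1 N2 with hNdef
        have hfibN : ∃ m, (u N : X × ℝ).1 = q m := by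
          by_contra hcon
          have h0 := lamZ_base r hr0 q D (u N) hcon
          have := hN1 N (le_max_left _ _)
          rw [h0] at this
          linarith
        obtain ⟨m, hm⟩ := hfibN
        obtain ⟨k0, hk0N, hk0⟩ := hfib m N
        have hpair : ∃ j, (u k0 : X × ℝ).1 = q j ∧ (u N : X × ℝ).1 = q j := by
          by_contra hcon
          have hlt := hN2 k0 (le_trans (le_max_right _ _) hk0N) N (le_max_right _ _)
          rw [rhoZ_base r hr0 q D _ _ hcon] at hlt
          have l2 := lamZ_nonneg r hr0 q D (u N)
          have d0 : (0:ℝ) ≤ dist (u k0 : X × ℝ).1 (u N : X × ℝ).1 := dist_nonneg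
          have := hN1 k0 (le_trans (le_max_left _ _) hk0N)
          linarith
        obtain ⟨j, hj1, hj2⟩ := hpair
        obtain rfl : j = m := hq (hj2.symm.trans hm)
        exact hk0 hj1
      rw [hL0] at hL
      refine ⟨eXmap r hr0 q x, ?_⟩
      have key : ∀ k, dist (u k) (eXmap r hr0 q x) ≤
          lamZ r hr0 q D (u k) + dist (u k : X × ℝ).1 x := by
        intro k
        rw [hdist]
        by_cases hp : ∃ j, (u k : X × ℝ).1 = q j ∧ x = q j
        · obtain ⟨j, h1, h2⟩ := hp
          rw [rhoZ_fiber r hr0 q hq D _ _ h1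
            (show ((eXmap r hr0 q x : X × ℝ)).1 = q j from h2)]
          have heq : @dist _ (D j).toDist ⟨(u k : X × ℝ).2, (u k).2.1 j h1⟩
              ⟨(eXmap r hr0 q x : X × ℝ).2, (eXmap r hr0 q x).2.1 j h2⟩
                = lamZ r hr0 q D (u k) := (lamZ_eq r hr0 q hq D (u k) h1).symm
          exact le_trans (le_of_eq heq) (le_add_of_nonneg_right dist_nonneg)
        · rw [rhoZ_base r hr0 q D _ _ hp, lamZ_zero r hr0 q D (eXmap r hr0 q x) rfl]
          exact le_of_eq (add_zero _)
      have hsum : Tendsto (fun k => lamZ r hr0 q D (u k) + dist (u k : X × ℝ).1 x)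
          atTop (𝓝 0) := by
        simpa using hL.add (tendsto_iff_dist_tendsto_zero.1 hx)
      exact tendsto_iff_dist_tendsto_zero.2
        (squeeze_zero (fun k => dist_nonneg) key hsum)
end

section
/- Let C ≥ 1, let (X,d) be a compact metric space and let {X_k}_{k∈ℕ} be a sequence of nonempty subsets of X, each endowed with the restriction d_k of d. Assume that (X_k,d_k) is C-quasiconvex for every k ∈ ℕ and that the Hausdorff–Pompeiu distance d_H(X_k, X) tends to 0 as k → ∞. Then (X,d) is C-quasiconvex. -/
open Filter Topology Set MeasureTheory
open scoped ENNReal NNReal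

section Aux
variable {X : Type*} [MetricSpace X]

lemma aux_sum_ite_le (n m : ℕ) (c : ℝ≥0∞) :
    (∑ i ∈ Finset.range n, if i + 1 = m then c else 0) ≤ c := by
  rcases m with _ | m'
  · simp
  · have : ∀ i ∈ Finset.range n, (if i + 1 = m' + 1 then c else 0)
        = (if i = m' then c else 0) := by
      intro i _
      simp [Nat.succ_inj]
    rw [Finset.sum_congr rfl this, Finset.sum_ite_eq' (Finset.range n) m' (fun _ => c)]
    split <;> simp

lemma aux_evar_le_of_dist_le {γ : ℝ → X} {L a b : ℝ} (hL : 0 ≤ L)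
    (h : ∀ s ∈ Icc a b, ∀ t ∈ Icc a b, s ≤ t → dist (γ s) (γ t) ≤ L * (t - s)) :
    eVariationOn γ (Icc a b) ≤ ENNReal.ofReal (L * (b - a)) := by
  by_cases hab : a ≤ b
  · apply iSup_le
    rintro ⟨n, u, hu, us⟩
    calc ∑ i ∈ Finset.range n, edist (γ (u (i+1))) (γ (u i))
        ≤ ∑ i ∈ Finset.range n, ENNReal.ofReal (L * (u (i+1) - u i)) := by
          refine Finset.sum_le_sum fun i _ => ?_
          rw [edist_dist]
          refine ENNReal.ofReal_le_ofReal ?_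
          rw [dist_comm]
          exact h _ (us i) _ (us (i+1)) (hu (Nat.le_succ i))
      _ = ENNReal.ofReal (∑ i ∈ Finset.range n, L * (u (i+1) - u i)) := by
          rw [ENNReal.ofReal_sum_of_nonneg]
          intro i _
          exact mul_nonneg hL (sub_nonneg.2 (hu (Nat.le_succ i)))
      _ ≤ ENNReal.ofReal (L * (b - a)) := by
          apply ENNReal.ofReal_le_ofReal
          rw [← Finset.mul_sum, Finset.sum_range_sub]
          have h1 : u n - u 0 ≤ b - a := by
            have := (us n).2
            have := (us 0).1
            linarith
          exact mul_le_mul_of_nonneg_left h1 hL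
  · rw [Set.Icc_eq_empty hab]
    simp [eVariationOn.subsingleton γ subsingleton_empty]

lemma aux_right_small {γ : ℝ → X} {T : ℝ}
    (hγ : ContinuousOn γ (Icc 0 T)) (hfin : eVariationOn γ (Icc 0 T) ≠ ⊤)
    {s : ℝ} (hs : s ∈ Ico 0 T) {ε : ℝ} (hε : 0 < ε) :
    ∃ t ∈ Ioc s T, eVariationOn γ (Icc s t) ≤ ENNReal.ofReal ε := by
  set W := eVariationOn γ (Icc s T) with hW
  have hsub : Icc s T ⊆ Icc 0 T := Icc_subset_Icc hs.1 le_rfl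
  have hWfin : W ≠ ⊤ := fun h => hfin (top_le_iff.1 (h ▸ eVariationOn.mono γ hsub))
  by_cases hWε : W ≤ ENNReal.ofReal ε
  · exact ⟨T, ⟨hs.2, le_rfl⟩, hWε⟩
  push_neg at hWε
  have hW0 : W ≠ 0 := by
    intro h
    rw [h] at hWε
    exact absurd hWε (by simp)
  have hεhalf : (0:ℝ≥0∞) < ENNReal.ofReal (ε/2) := ENNReal.ofReal_pos.2 (by linarith)
  have hlt : W - ENNReal.ofReal (ε/2) < W := ENNReal.sub_lt_self hWfin hW0 hεhalf.ne'
  rw [hW] at hlt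
  conv at hlt => rw [eVariationOn]
  rw [lt_iSup_iff] at hlt
  obtain ⟨⟨n, u, hu, us⟩, hp⟩ := hlt
  simp only at hp
  have hsT : s ∈ Icc 0 T := ⟨hs.1, hs.2.le⟩
  obtain ⟨δ, hδ, hδε⟩ : ∃ δ > 0, ∀ r ∈ Icc 0 T, dist r s < δ → dist (γ r) (γ s) < ε/2 := by
    have hc := hγ s hsT
    rw [Metric.continuousWithinAt_iff] at hc
    obtain ⟨δ, hδ, hd⟩ := hc (ε/2) (by linarith)
    exact ⟨δ, hδ, fun r hr hrs => hd hr hrs⟩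
  by_cases hex : ∃ i, i ≤ n ∧ s < u i
  case neg =>
    exfalso
    push_neg at hex
    have hz : ∀ i ∈ Finset.range n, edist (γ (u (i+1))) (γ (u i)) = 0 := by
      intro i hi
      rw [Finset.mem_range] at hi
      have h1 : u i = s := le_antisymm (hex i (by omega)) (us i).1
      have h2 : u (i+1) = s := le_antisymm (hex (i+1) (by omega)) (us (i+1)).1
      rw [h1, h2, edist_self]
    rw [Finset.sum_eq_zero hz] at hp
    exact absurd hp (by simp)
  case pos =>
    set m := Nat.find hex with hm
    obtain ⟨hmn, hsm⟩ := Nat.find_spec hex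
    have hlt' : ∀ i < m, u i = s := by
      intro i hi
      have h' := Nat.find_min hex hi
      push_neg at h'
      exact le_antisymm (h' (le_trans hi.le hmn)) (us i).1
    set t := min (u m) (s + δ/2) with ht
    have hst : s < t := lt_min hsm (by linarith)
    have htum : t ≤ u m := min_le_left _ _
    have htT : t ≤ T := htum.trans (us m).2
    have htmem : t ∈ Icc 0 T := ⟨le_trans hs.1 hst.le, htT⟩
    have hdistst : edist (γ s) (γ t) ≤ ENNReal.ofReal (ε/2) := by
      rw [edist_dist, dist_comm]
      apply ENNReal.ofReal_le_ofReal
      have hts : dist t s < δ := by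
        rw [Real.dist_eq, abs_of_nonneg (by linarith)]
        have := min_le_right (u m) (s + δ/2)
        linarith
      exact (hδε t htmem hts).le
    set u' : ℕ → ℝ := fun i => max (u i) t with hu'
    have hu'mono : Monotone u' := fun i j hij => max_le_max (hu hij) le_rfl
    have hu'mem : ∀ i, u' i ∈ Icc t T := fun i => ⟨le_max_right _ _, max_le (us i).2 htT⟩
    have hterm : ∀ i ∈ Finset.range n,
        edist (γ (u (i+1))) (γ (u i)) ≤
          edist (γ (u' (i+1))) (γ (u' i)) + (if i + 1 = m then edist (γ s) (γ t) else 0) := by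
      intro i _
      rcases lt_trichotomy (i+1) m with h | h | h
      · have e1 : u i = s := hlt' i (by omega)
        have e2 : u (i+1) = s := hlt' _ h
        rw [e1, e2, edist_self, if_neg (by omega)]
        simp
      · have e1 : u i = s := hlt' i (by omega)
        have e2 : u' (i+1) = u (i+1) := by
          apply max_eq_left
          exact htum.trans (hu (by omega))
        have e3 : u' i = t := by
          simp only [hu', e1]
          exact max_eq_right hst.le
        rw [e1, e2, e3, if_pos h]
        calc edist (γ (u (i+1))) (γ s)
            ≤ edist (γ (u (i+1))) (γ t) + edist (γ t) (γ s) := edist_triangle _ _ _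
          _ = edist (γ (u (i+1))) (γ t) + edist (γ s) (γ t) := by rw [edist_comm (γ t)]
      · have e2 : u' (i+1) = u (i+1) := max_eq_left (htum.trans (hu (by omega)))
        have e1 : u' i = u i := max_eq_left (htum.trans (hu (by omega)))
        rw [e1, e2, if_neg (by omega)]
        simp
    have hItT_fin : eVariationOn γ (Icc t T) ≠ ⊤ :=
      fun h => hfin (top_le_iff.1 (h ▸ eVariationOn.mono γ (Icc_subset_Icc htmem.1 le_rfl)))
    have hsum : W - ENNReal.ofReal (ε/2) <
        eVariationOn γ (Icc t T) + ENNReal.ofReal (ε/2) := by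
      calc W - ENNReal.ofReal (ε/2)
          < ∑ i ∈ Finset.range n, edist (γ (u (i+1))) (γ (u i)) := hp
        _ ≤ ∑ i ∈ Finset.range n,
              (edist (γ (u' (i+1))) (γ (u' i)) + if i + 1 = m then edist (γ s) (γ t) else 0) :=
            Finset.sum_le_sum hterm
        _ = (∑ i ∈ Finset.range n, edist (γ (u' (i+1))) (γ (u' i)))
              + ∑ i ∈ Finset.range n, (if i + 1 = m then edist (γ s) (γ t) else 0) :=
            Finset.sum_add_distrib
        _ ≤ eVariationOn γ (Icc t T) + ENNReal.ofReal (ε/2) := by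
            refine add_le_add (eVariationOn.sum_le (f := γ) (n := n) hu'mono hu'mem) ?_
            exact le_trans (aux_sum_ite_le n m _) hdistst
    have hWle : W ≤ eVariationOn γ (Icc t T) + ENNReal.ofReal ε := by
      have h2 : ENNReal.ofReal (ε/2) ≤ W :=
        le_trans (ENNReal.ofReal_le_ofReal (by linarith)) hWε.le
      have h3 := (ENNReal.sub_lt_iff_lt_right (by simp) h2).1 hsum
      calc W ≤ eVariationOn γ (Icc t T) + ENNReal.ofReal (ε/2) + ENNReal.ofReal (ε/2) := h3.le
        _ = eVariationOn γ (Icc t T) + ENNReal.ofReal ε := by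
            rw [add_assoc, ← ENNReal.ofReal_add (by linarith) (by linarith)]
            norm_num
    have hadd : eVariationOn γ (Icc s t) + eVariationOn γ (Icc t T) = W := by
      have h4 := eVariationOn.Icc_add_Icc γ (s := (univ : Set ℝ)) hst.le htT (mem_univ t)
      simpa [univ_inter] using h4
    refine ⟨t, ⟨hst, htT⟩, ?_⟩
    rw [← hadd, add_comm (eVariationOn γ (Icc s t))] at hWle
    exact ENNReal.le_of_add_le_add_left hItT_fin hWle
lemma aux_left_small {γ : ℝ → X} {T : ℝ}
    (hγ : ContinuousOn γ (Icc 0 T)) (hfin : eVariationOn γ (Icc 0 T) ≠ ⊤)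
    {s : ℝ} (hs : s ∈ Ioc 0 T) {ε : ℝ} (hε : 0 < ε) :
    ∃ t ∈ Ico 0 s, eVariationOn γ (Icc t s) ≤ ENNReal.ofReal ε := by
  set φ : ℝ → ℝ := fun r => T - r with hφ
  have hanti : ∀ u : Set ℝ, AntitoneOn φ u := by
    intro u a _ b _ hab
    simp only [hφ]
    linarith
  have hcomp : ∀ a b : ℝ, eVariationOn (γ ∘ φ) (Icc a b) = eVariationOn γ (Icc (T - b) (T - a)) := by
    intro a b
    rw [eVariationOn.comp_eq_of_antitoneOn γ φ (hanti _)]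
    congr 1
    exact image_const_sub_Icc T a b
  have hγφ : ContinuousOn (γ ∘ φ) (Icc 0 T) := by
    apply hγ.comp ((continuous_const.sub continuous_id).continuousOn)
    intro r hr
    refine ⟨?_, ?_⟩ <;> simp only [hφ, id_eq, Pi.sub_apply]
    · linarith [hr.2]
    · linarith [hr.1]
  have hfinφ : eVariationOn (γ ∘ φ) (Icc 0 T) ≠ ⊤ := by
    rw [hcomp 0 T]
    simpa using hfin
  obtain ⟨t', ht', hvar⟩ :=
    aux_right_small hγφ hfinφ (s := T - s) ⟨by linarith [hs.2], by linarith [hs.1]⟩ hε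
  refine ⟨T - t', ⟨by linarith [ht'.2], by linarith [ht'.1]⟩, ?_⟩
  rw [hcomp (T - s) t'] at hvar
  have he : T - (T - s) = s := by ring
  rwa [he] at hvar

lemma aux_chain {γ : ℝ → X} {T L : ℝ} (hT : 0 ≤ T) (hL : 0 ≤ L)
    (hγ : ContinuousOn γ (Icc 0 T)) (hvar : eVariationOn γ (Icc 0 T) ≤ ENNReal.ofReal L)
    {n : ℕ} (hn : 0 < n) :
    ∃ z : ℕ → X, z 0 = γ 0 ∧ z n = γ T ∧
      ∀ i ≤ n, ∀ j ≤ n, dist (z i) (z j) ≤ L * |(i:ℝ) - (j:ℝ)| / n := by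
  have hfin : eVariationOn γ (Icc 0 T) ≠ ⊤ := ne_top_of_le_ne_top ENNReal.ofReal_ne_top hvar
  rcases eq_or_lt_of_le hT with hT0 | hT0
  · refine ⟨fun _ => γ 0, rfl, by rw [← hT0], fun i _ j _ => ?_⟩
    simp only [dist_self]
    positivity
  set v : ℝ → ℝ := fun r => (eVariationOn γ (Icc 0 r)).toReal with hv
  have hfin' : ∀ a b : ℝ, 0 ≤ a → b ≤ T → eVariationOn γ (Icc a b) ≠ ⊤ := fun a b ha hb =>
    ne_top_of_le_ne_top hfin (eVariationOn.mono γ (Icc_subset_Icc ha hb))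
  have hvdiff : ∀ a b : ℝ, 0 ≤ a → a ≤ b → b ≤ T →
      (eVariationOn γ (Icc a b)).toReal = v b - v a := by
    intro a b ha hab hb
    have hIcc := eVariationOn.Icc_add_Icc γ (s := (univ : Set ℝ)) ha hab (mem_univ a)
    simp only [univ_inter] at hIcc
    have h1 := hfin' 0 a le_rfl (hab.trans hb)
    have h2 := hfin' a b ha hb
    simp only [hv]
    rw [← hIcc, ENNReal.toReal_add h1 h2]
    ring
  have hdist : ∀ a b : ℝ, 0 ≤ a → a ≤ b → b ≤ T → dist (γ a) (γ b) ≤ v b - v a := by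
    intro a b ha hab hb
    rw [← hvdiff a b ha hab hb, dist_edist]
    exact ENNReal.toReal_mono (hfin' a b ha hb)
      (eVariationOn.edist_le γ (left_mem_Icc.2 hab) (right_mem_Icc.2 hab))
  have hvmono : ∀ a b, 0 ≤ a → a ≤ b → b ≤ T → v a ≤ v b := by
    intro a b ha hab hb
    have h0 : (0:ℝ) ≤ (eVariationOn γ (Icc a b)).toReal := ENNReal.toReal_nonneg
    rw [hvdiff a b ha hab hb] at h0
    linarith
  have hvcont : ContinuousOn v (Icc 0 T) := by
    intro s hs
    rw [Metric.continuousWithinAt_iff]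
    intro ε hε
    have hright : ∃ δ > 0, ∀ t ∈ Icc 0 T, s ≤ t → t - s < δ → v t - v s ≤ ε/2 := by
      rcases lt_or_eq_of_le hs.2 with hsT | hsT
      · obtain ⟨tp, htp, hvarp⟩ := aux_right_small hγ hfin ⟨hs.1, hsT⟩ (half_pos hε)
        refine ⟨tp - s, by linarith [htp.1], fun t ht hst htδ => ?_⟩
        rw [← hvdiff s t hs.1 hst ht.2]
        refine ENNReal.toReal_le_of_le_ofReal (by linarith) ?_
        exact le_trans (eVariationOn.mono γ (Icc_subset_Icc le_rfl (by linarith))) hvarp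
      · refine ⟨1, one_pos, fun t ht hst _ => ?_⟩
        have : t = s := le_antisymm (hsT ▸ ht.2) hst
        rw [this]
        simp
        linarith
    have hleft : ∃ δ > 0, ∀ t ∈ Icc 0 T, t ≤ s → s - t < δ → v s - v t ≤ ε/2 := by
      rcases (lt_or_eq_of_le hs.1) with hs0 | hs0
      · obtain ⟨tm, htm, hvarm⟩ := aux_left_small hγ hfin ⟨hs0, hs.2⟩ (half_pos hε)
        refine ⟨s - tm, by linarith [htm.2], fun t ht hts htδ => ?_⟩
        rw [← hvdiff t s ht.1 hts hs.2]
        refine ENNReal.toReal_le_of_le_ofReal (by linarith) ?_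
        exact le_trans (eVariationOn.mono γ (Icc_subset_Icc (by linarith) le_rfl)) hvarm
      · refine ⟨1, one_pos, fun t ht hts _ => ?_⟩
        have : t = s := le_antisymm hts (hs0 ▸ ht.1)
        rw [this]
        simp
        linarith
    obtain ⟨δ₁, hδ₁, h₁⟩ := hright
    obtain ⟨δ₂, hδ₂, h₂⟩ := hleft
    refine ⟨min δ₁ δ₂, lt_min hδ₁ hδ₂, fun {t} ht htd => ?_⟩
    rw [Real.dist_eq] at htd ⊢
    rcases le_total s t with hst | hts
    · have habs : |t - s| = t - s := abs_of_nonneg (by linarith)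
      rw [habs] at htd
      have hb := h₁ t ht hst (lt_of_lt_of_le htd (min_le_left _ _))
      have hmono := hvmono s t hs.1 hst ht.2
      rw [abs_of_nonneg (by linarith)]
      linarith
    · have habs : |t - s| = s - t := by rw [abs_sub_comm]; exact abs_of_nonneg (by linarith)
      rw [habs] at htd
      have hb := h₂ t ht hts (lt_of_lt_of_le htd (min_le_right _ _))
      have hmono := hvmono t s ht.1 hts hs.2
      rw [abs_of_nonpos (by linarith), neg_sub]
      linarith
  set V := v T with hV
  have hv0 : v 0 = 0 := by
    simp only [hv, Icc_self]
    rw [eVariationOn.subsingleton γ subsingleton_singleton]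
    simp
  have hVL : V ≤ L := ENNReal.toReal_le_of_le_ofReal hL hvar
  have hV0 : 0 ≤ V := by
    have := hvmono 0 T le_rfl hT le_rfl
    rw [hv0] at this
    exact this
  have hIVT := intermediate_value_Icc hT hvcont
  have hpt : ∀ i : ℕ, ∃ r ∈ Icc (0:ℝ) T, v r = (min i n) * V / n := by
    intro i
    apply hIVT
    rw [hv0]
    constructor
    · positivity
    · show (min i n : ℕ) * V / n ≤ V
      have h1 : ((min i n : ℕ) : ℝ) ≤ (n : ℝ) := Nat.cast_le.2 (min_le_right _ _)
      have hn' : (0:ℝ) < n := Nat.cast_pos.2 hn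
      rw [div_le_iff₀ hn']
      nlinarith
  choose r hrmem hrval using hpt
  have hdistr : ∀ i j : ℕ, dist (γ (r i)) (γ (r j)) ≤ |v (r j) - v (r i)| := by
    intro i j
    rcases le_total (r i) (r j) with h | h
    · exact (hdist _ _ (hrmem i).1 h (hrmem j).2).trans (le_abs_self _)
    · rw [dist_comm]
      refine (hdist _ _ (hrmem j).1 h (hrmem i).2).trans ?_
      rw [abs_sub_comm]
      exact le_abs_self _
  have hn' : (0:ℝ) < n := Nat.cast_pos.2 hn
  refine ⟨fun i => γ (r i), ?_, ?_, ?_⟩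
  · have h0 : v (r 0) = 0 := by
      have := hrval 0
      simpa using this
    have hd := hdist 0 (r 0) le_rfl (hrmem 0).1 (hrmem 0).2
    rw [h0, hv0] at hd
    have : dist (γ 0) (γ (r 0)) = 0 := le_antisymm (by linarith) dist_nonneg
    exact (dist_eq_zero.1 this).symm
  · have h0 : v (r n) = V := by
      have := hrval n
      rw [min_self] at this
      rw [this]
      field_simp
    have hd := hdist (r n) T (hrmem n).1 (hrmem n).2 le_rfl
    rw [h0] at hd
    have : dist (γ (r n)) (γ T) = 0 := le_antisymm (by simpa [hV] using hd) dist_nonneg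
    exact dist_eq_zero.1 this
  · intro i hi j hj
    refine (hdistr i j).trans ?_
    rw [hrval i, hrval j, min_eq_left hi, min_eq_left hj]
    have he : |(j:ℝ) * V / n - (i:ℝ) * V / n| = |(i:ℝ) - (j:ℝ)| * V / n := by
      rw [div_sub_div_same, ← sub_mul, abs_div, abs_mul, abs_sub_comm,
        abs_of_nonneg hV0, abs_of_nonneg hn'.le]
    rw [he, div_le_div_iff₀ hn' hn']
    nlinarith [mul_nonneg (mul_nonneg (sub_nonneg.2 hVL) (abs_nonneg ((i:ℝ) - (j:ℝ)))) hn'.le]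

end Aux

/-- A compact metric space approximated in the Hausdorff–Pompeiu distance by
`C`-quasiconvex subsets is itself `C`-quasiconvex. -/
theorem stmt14 {X : Type*} [MetricSpace X] [CompactSpace X] (C : ℝ) (hC : 1 ≤ C)
    (Xs : ℕ → Set X) (hne : ∀ k, (Xs k).Nonempty)
    (hqc : ∀ k, ∀ a b : Xs k, intrinsicDist a b ≤ ENNReal.ofReal (C * dist a b))
    (hH : Filter.Tendsto (fun k => Metric.hausdorffDist (Xs k) (Set.univ : Set X))
      Filter.atTop (𝓝 0)) :
    ∀ x y : X, intrinsicDist x y ≤ ENNReal.ofReal (C * dist x y) := by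
  intro x y
  haveI : Nonempty X := ⟨x⟩
  have hbound : Bornology.IsBounded (Set.univ : Set X) := isCompact_univ.isBounded
  set h : ℕ → ℝ := fun k => Metric.hausdorffDist (Xs k) Set.univ + 1/(k+1) with hh
  have hkey : ∀ k : ℕ, ∃ (p q : X) (z : ℕ → X),
      dist x p ≤ h k ∧ dist y q ≤ h k ∧ z 0 = p ∧ z (k+1) = q ∧
      ∀ i ≤ k+1, ∀ j ≤ k+1,
        dist (z i) (z j) ≤ (C * dist p q + 1/(k+1)) * |(i:ℝ) - (j:ℝ)| / (k+1) := by
    intro k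
    have hne' : (Xs k).Nonempty := hne k
    have hfinH : EMetric.hausdorffEdist (Xs k) Set.univ ≠ ⊤ :=
      Metric.hausdorffEdist_ne_top_of_nonempty_of_bounded hne' ⟨x, mem_univ x⟩
        (hbound.subset (subset_univ _)) hbound
    have hgetp : ∀ w : X, ∃ p ∈ Xs k, dist w p ≤ h k := by
      intro w
      have h1 : Metric.infDist w (Xs k) ≤ Metric.hausdorffDist Set.univ (Xs k) :=
        Metric.infDist_le_hausdorffDist_of_mem (mem_univ w)
          (by rw [Metric.hausdorffEDist_comm]; exact hfinH)
      rw [Metric.hausdorffDist_comm] at h1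
      have hpos : (0:ℝ) < 1/(k+1) := by positivity
      have h2 : Metric.infDist w (Xs k) < h k := by
        rw [hh]
        simp only
        linarith
      obtain ⟨p, hp, hdp⟩ := (Metric.infDist_lt_iff hne').1 h2
      exact ⟨p, hp, hdp.le⟩
    obtain ⟨p, hp, hdp⟩ := hgetp x
    obtain ⟨q, hq, hdq⟩ := hgetp y
    have hpos : (0:ℝ) < 1/(k+1) := by positivity
    have hCd : (0:ℝ) ≤ C * dist p q := mul_nonneg (by linarith) dist_nonneg
    have h1 : intrinsicDist (⟨p, hp⟩ : Xs k) ⟨q, hq⟩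
        < ENNReal.ofReal (C * dist p q + 1/(k+1)) := by
      refine lt_of_le_of_lt (hqc k ⟨p, hp⟩ ⟨q, hq⟩) ?_
      rw [Subtype.dist_eq]
      exact (ENNReal.ofReal_lt_ofReal_iff (by linarith)).2 (by linarith)
    rw [intrinsicDist] at h1
    simp only [iInf_lt_iff] at h1
    obtain ⟨T, hT, γ, hcont, h0, hTy, hvar⟩ := h1
    set E : ℝ → X := fun t => (γ t : X) with hE
    have hcontE : ContinuousOn E (Icc 0 T) := continuous_subtype_val.comp_continuousOn hcont
    have hvarE : eVariationOn E (Icc 0 T) ≤ ENNReal.ofReal (C * dist p q + 1/(k+1)) := by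
      refine le_trans ?_ hvar.le
      have hl := ((LipschitzWith.subtype_val (Xs k)).lipschitzOnWith
        (s := (univ : Set (Xs k)))).comp_eVariationOn_le (mapsTo_univ γ (Icc 0 T))
      simpa [hE, Function.comp_def] using hl
    obtain ⟨z, hz0, hzn, hzd⟩ := aux_chain hT (by positivity) hcontE hvarE (Nat.succ_pos k)
    refine ⟨p, q, z, hdp, hdq, ?_, ?_, ?_⟩
    · rw [hz0, hE]
      simp [h0]
    · rw [hzn, hE]
      simp [hTy]
    · exact_mod_cast hzd
  choose p q z hdp hdq hz0 hzn hzd using hkey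
  have hhlim : Tendsto h atTop (𝓝 0) := by
    rw [hh]
    have := hH.add tendsto_one_div_add_atTop_nhds_zero_nat
    simpa using this
  have hplim : Tendsto p atTop (𝓝 x) := by
    apply tendsto_iff_dist_tendsto_zero.2
    exact squeeze_zero (fun k => dist_nonneg) (fun k => by rw [dist_comm]; exact hdp k) hhlim
  have hqlim : Tendsto q atTop (𝓝 y) := by
    apply tendsto_iff_dist_tendsto_zero.2
    exact squeeze_zero (fun k => dist_nonneg) (fun k => by rw [dist_comm]; exact hdq k) hhlim
  set L : ℕ → ℝ := fun k => C * dist (p k) (q k) + 1/(k+1) with hLdef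
  have hLpos : ∀ k, 0 ≤ L k := by
    intro k
    have : (0:ℝ) < 1/(k+1) := by positivity
    have := mul_nonneg (by linarith : (0:ℝ) ≤ C) (dist_nonneg (x := p k) (y := q k))
    simp only [hLdef]
    positivity
  set Linf : ℝ := C * dist x y with hLinf
  have hLinf0 : 0 ≤ Linf := mul_nonneg (by linarith) dist_nonneg
  have hLlim : Tendsto L atTop (𝓝 Linf) := by
    have h1 : Tendsto (fun k => dist (p k) (q k)) atTop (𝓝 (dist x y)) := hplim.dist hqlim
    have h2 := ((tendsto_const_nhds (x := C) (f := atTop)).mul h1).add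
      tendsto_one_div_add_atTop_nhds_zero_nat
    rw [hLdef, hLinf]
    simpa [one_div] using h2
  set f : ℕ → ℝ → X := fun k t => z k (min (k+1) ⌊t * ((k:ℝ)+1)⌋₊) with hf
  have hfd : ∀ k, ∀ s ∈ Icc (0:ℝ) 1, ∀ t ∈ Icc (0:ℝ) 1, s ≤ t →
      dist (f k s) (f k t) ≤ L k * (t - s) + L k * (1/(k+1)) := by
    intro k s hs t ht hst
    set i := min (k+1) ⌊s * ((k:ℝ)+1)⌋₊ with hi
    set j := min (k+1) ⌊t * ((k:ℝ)+1)⌋₊ with hj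
    have hik : i ≤ k+1 := min_le_left _ _
    have hjk : j ≤ k+1 := min_le_left _ _
    have hd := hzd k i hik j hjk
    have hk1 : (0:ℝ) < (k:ℝ)+1 := by positivity
    have hij : i ≤ j := min_le_min le_rfl (Nat.floor_mono (by nlinarith))
    have habs : |(i:ℝ) - (j:ℝ)| = (j:ℝ) - i := by
      rw [abs_sub_comm]
      exact abs_of_nonneg (sub_nonneg.2 (Nat.cast_le.2 hij))
    have hjb : (j:ℝ) ≤ t * ((k:ℝ)+1) := by
      calc (j:ℝ) ≤ (⌊t * ((k:ℝ)+1)⌋₊ : ℝ) := Nat.cast_le.2 (min_le_right _ _)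
        _ ≤ t * ((k:ℝ)+1) := Nat.floor_le (mul_nonneg ht.1 (by positivity))
    have hib : s * ((k:ℝ)+1) - 1 ≤ (i:ℝ) := by
      rcases le_or_gt (k+1) ⌊s * ((k:ℝ)+1)⌋₊ with hc | hc
      · have : i = k+1 := min_eq_left hc
        rw [this]
        push_cast
        nlinarith [hs.2]
      · have : i = ⌊s * ((k:ℝ)+1)⌋₊ := min_eq_right hc.le
        rw [this]
        have := Nat.lt_floor_add_one (s * ((k:ℝ)+1))
        linarith
    calc dist (f k s) (f k t) ≤ L k * |(i:ℝ) - (j:ℝ)| / ((k:ℝ)+1) := by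
          convert hd using 3 <;> push_cast <;> ring
      _ = L k * ((j:ℝ) - i) / ((k:ℝ)+1) := by rw [habs]
      _ ≤ L k * ((t - s) * ((k:ℝ)+1) + 1) / ((k:ℝ)+1) := by
          have hLk := hLpos k
          gcongr
          nlinarith
      _ = L k * (t - s) + L k * (1/((k:ℝ)+1)) := by field_simp
  set U : Ultrafilter ℕ := Ultrafilter.of atTop with hU
  have hUle : (U : Filter ℕ) ≤ atTop := Ultrafilter.of_le _
  set g : ℝ → X := fun t => (U.map (fun k => f k t)).lim with hg
  have hgt : ∀ t, Tendsto (fun k => f k t) (U : Filter ℕ) (𝓝 (g t)) := by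
    intro t
    exact (U.map (fun k => f k t)).le_nhds_lim
  have hgd : ∀ s ∈ Icc (0:ℝ) 1, ∀ t ∈ Icc (0:ℝ) 1, s ≤ t →
      dist (g s) (g t) ≤ Linf * (t - s) := by
    intro s hs t ht hst
    have h1 : Tendsto (fun k => dist (f k s) (f k t)) (U : Filter ℕ)
        (𝓝 (dist (g s) (g t))) := (hgt s).dist (hgt t)
    have h2 : Tendsto (fun k => L k * (t - s) + L k * (1/((k:ℝ)+1))) atTop
        (𝓝 (Linf * (t - s) + Linf * 0)) :=
      (hLlim.mul tendsto_const_nhds).add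
        (hLlim.mul tendsto_one_div_add_atTop_nhds_zero_nat)
    have h3 := le_of_tendsto_of_tendsto' h1 (h2.mono_left hUle)
      (fun k => hfd k s hs t ht hst)
    simpa using h3
  have hg0 : g 0 = x := by
    have he : ∀ k, f k 0 = p k := by
      intro k
      rw [hf]
      simp only [zero_mul, Nat.floor_zero, min_eq_right (Nat.zero_le _)]
      exact hz0 k
    have h1 : Tendsto (fun k => f k 0) (U : Filter ℕ) (𝓝 x) := by
      refine (hplim.mono_left hUle).congr fun k => (he k).symm
    exact tendsto_nhds_unique (hgt 0) h1
  have hg1 : g 1 = y := by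
    have he : ∀ k, f k 1 = q k := by
      intro k
      rw [hf]
      simp only [one_mul]
      have hfl : ⌊((k:ℝ)+1)⌋₊ = k+1 := by
        rw [show ((k:ℝ)+1) = ((k+1 : ℕ) : ℝ) by push_cast; ring, Nat.floor_natCast]
      rw [hfl, min_self]
      exact hzn k
    have h1 : Tendsto (fun k => f k 1) (U : Filter ℕ) (𝓝 y) := by
      refine (hqlim.mono_left hUle).congr fun k => (he k).symm
    exact tendsto_nhds_unique (hgt 1) h1
  have hgd' : ∀ s ∈ Icc (0:ℝ) 1, ∀ t ∈ Icc (0:ℝ) 1, dist (g s) (g t) ≤ Linf * |t - s| := by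
    intro s hs t ht
    rcases le_total s t with hst | hts
    · rw [abs_of_nonneg (by linarith)]
      exact hgd s hs t ht hst
    · rw [abs_of_nonpos (by linarith), dist_comm]
      have := hgd t ht s hs hts
      linarith [this]
  have hcontg : ContinuousOn g (Icc 0 1) := by
    refine LipschitzOnWith.continuousOn (K := Real.toNNReal Linf) ?_
    rw [lipschitzOnWith_iff_dist_le_mul]
    intro a ha b hb
    rw [Real.coe_toNNReal _ hLinf0]
    calc dist (g a) (g b) ≤ Linf * |b - a| := hgd' a ha b hb
      _ = Linf * dist a b := by rw [Real.dist_eq, abs_sub_comm]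
  have hvarg : eVariationOn g (Icc 0 1) ≤ ENNReal.ofReal Linf := by
    have := aux_evar_le_of_dist_le (γ := g) (a := 0) (b := 1) hLinf0
      (fun s hs t ht hst => by
        have := hgd s hs t ht hst
        linarith)
    simpa using this
  calc intrinsicDist x y ≤ eVariationOn g (Icc 0 1) := by
        rw [intrinsicDist]
        refine iInf_le_of_le 1 (iInf_le_of_le zero_le_one (iInf_le_of_le g
          (iInf_le_of_le hcontg (iInf_le_of_le hg0 (iInf_le_of_le hg1 le_rfl)))))
    _ ≤ ENNReal.ofReal (C * dist x y) := hvarg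
end

section
/- Let (X,d) be a metric space and endow X̃ := X × [0,1] with the metric ρ((x,s),(y,t)) := d(x,y) + |s−t|. Then the intrinsic distances satisfy ρ_I((x,s),(y,t)) = d_I(x,y) + |s−t| for all (x,s),(y,t) ∈ X̃, as an identity in [0,+∞]. -/
open Filter Topology Set MeasureTheory
open scoped ENNReal NNReal

/-- The `ℓ¹` (sum) metric on a product of two metric spaces. -/
noncomputable def sumMetric (X Y : Type*) [MetricSpace X] [MetricSpace Y] :
    MetricSpace (X × Y) where
  dist p q := dist p.1 q.1 + dist p.2 q.2
  dist_self p := by simp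
  dist_comm p q := by simp [dist_comm]
  dist_triangle p q r := by
    have h1 := dist_triangle p.1 q.1 r.1
    have h2 := dist_triangle p.2 q.2 r.2
    try simp only
    linarith
  eq_of_dist_eq_zero := by
    intro p q h
    try simp only at h
    have n1 : (0:ℝ) ≤ dist p.1 q.1 := dist_nonneg
    have n2 : (0:ℝ) ≤ dist p.2 q.2 := dist_nonneg
    have e1 : dist p.1 q.1 = 0 := by linarith
    have e2 : dist p.2 q.2 = 0 := by linarith
    have := eq_of_dist_eq_zero e1
    have := eq_of_dist_eq_zero e2
    exact Prod.ext ‹p.1 = q.1› ‹p.2 = q.2›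

namespace Stmt19Aux
variable {X Y : Type*} [MetricSpace X] [MetricSpace Y]

theorem sum_dist (p q : X × Y) :
    @dist _ (sumMetric X Y).toPseudoMetricSpace.toDist p q = dist p.1 q.1 + dist p.2 q.2 := rfl


theorem sum_edist (p q : X × Y) :
    @edist _ (sumMetric X Y).toPseudoMetricSpace.toEDist p q = edist p.1 q.1 + edist p.2 q.2 := by
  rw [@edist_dist _ (sumMetric X Y).toPseudoMetricSpace, sum_dist,
    ENNReal.ofReal_add dist_nonneg dist_nonneg, edist_dist, edist_dist]

theorem lip_fst :
    @LipschitzWith _ _ (@PseudoMetricSpace.toPseudoEMetricSpace _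
      (sumMetric X Y).toPseudoMetricSpace) _ 1 (Prod.fst : X × Y → X) := by
  apply @LipschitzWith.of_dist_le_mul _ _ (sumMetric X Y).toPseudoMetricSpace _
  intro p q
  rw [sum_dist]
  have := dist_nonneg (x := p.2) (y := q.2)
  simp only [NNReal.coe_one, one_mul]
  linarith

theorem lip_id_prod_sum :
    @LipschitzWith _ _ _ (@PseudoMetricSpace.toPseudoEMetricSpace _
      (sumMetric X Y).toPseudoMetricSpace) 2 (id : X × Y → X × Y) := by
  apply @LipschitzWith.of_dist_le_mul _ _ _ (sumMetric X Y).toPseudoMetricSpace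
  intro p q
  rw [show @dist _ (sumMetric X Y).toPseudoMetricSpace.toDist (id p) (id q)
      = dist p.1 q.1 + dist p.2 q.2 from rfl, Prod.dist_eq]
  have h1 : dist p.1 q.1 ≤ max (dist p.1 q.1) (dist p.2 q.2) := le_max_left _ _
  have h2 : dist p.2 q.2 ≤ max (dist p.1 q.1) (dist p.2 q.2) := le_max_right _ _
  push_cast
  linarith

theorem contOn_fst {f : ℝ → X × Y} {s : Set ℝ}
    (hf : @ContinuousOn _ _ _ (@UniformSpace.toTopologicalSpace _
      (@PseudoMetricSpace.toUniformSpace _ (sumMetric X Y).toPseudoMetricSpace)) f s) :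
    ContinuousOn (fun u => (f u).1) s := by
  have hfst : @Continuous (X × Y) X (@UniformSpace.toTopologicalSpace _
      (@PseudoMetricSpace.toUniformSpace _ (sumMetric X Y).toPseudoMetricSpace)) _
      Prod.fst :=
    @LipschitzWith.continuous (X × Y) X (@PseudoMetricSpace.toPseudoEMetricSpace _
      (sumMetric X Y).toPseudoMetricSpace) _ 1 Prod.fst (lip_fst (X := X) (Y := Y))
  exact @Continuous.comp_continuousOn ℝ (X × Y) X _ (@UniformSpace.toTopologicalSpace _
    (@PseudoMetricSpace.toUniformSpace _ (sumMetric X Y).toPseudoMetricSpace)) _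
    Prod.fst f s hfst hf

theorem contOn_sum {f : ℝ → X × Y} {s : Set ℝ} (hf : ContinuousOn f s) :
    @ContinuousOn _ _ _ (@UniformSpace.toTopologicalSpace _
      (@PseudoMetricSpace.toUniformSpace _ (sumMetric X Y).toPseudoMetricSpace)) f s := by
  have hid : @Continuous (X × Y) (X × Y) _ (@UniformSpace.toTopologicalSpace _
      (@PseudoMetricSpace.toUniformSpace _ (sumMetric X Y).toPseudoMetricSpace))
      id :=
    @LipschitzWith.continuous (X × Y) (X × Y) _ (@PseudoMetricSpace.toPseudoEMetricSpace _
      (sumMetric X Y).toPseudoMetricSpace) 2 id (lip_id_prod_sum (X := X) (Y := Y))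
  exact @Continuous.comp_continuousOn ℝ (X × Y) (X × Y) _ _
    (@UniformSpace.toTopologicalSpace _
      (@PseudoMetricSpace.toUniformSpace _ (sumMetric X Y).toPseudoMetricSpace))
    id f s hid hf

theorem var_const_snd (γ : ℝ → X) (y₀ : Y) (s : Set ℝ) :
    @eVariationOn _ _ _ (@PseudoMetricSpace.toPseudoEMetricSpace _
      (sumMetric X Y).toPseudoMetricSpace) (fun u => ((γ u, y₀) : X × Y)) s
      ≤ eVariationOn γ s := by
  have hψ : @LipschitzWith X (X × Y) _ (@PseudoMetricSpace.toPseudoEMetricSpace _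
      (sumMetric X Y).toPseudoMetricSpace) 1 (fun x => ((x, y₀) : X × Y)) := by
    apply @LipschitzWith.of_dist_le_mul _ _ _ (sumMetric X Y).toPseudoMetricSpace
    intro x y
    rw [sum_dist]
    simp
  have hψ' := @LipschitzWith.lipschitzOnWith X (X × Y) _
      (@PseudoMetricSpace.toPseudoEMetricSpace _ (sumMetric X Y).toPseudoMetricSpace)
      1 (fun x => ((x, y₀) : X × Y)) Set.univ hψ
  have := @LipschitzOnWith.comp_eVariationOn_le ℝ _ X _ (X × Y)
    (@PseudoMetricSpace.toPseudoEMetricSpace _ (sumMetric X Y).toPseudoMetricSpace)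
    (fun x => ((x, y₀) : X × Y)) 1 Set.univ hψ' γ s (Set.mapsTo_univ γ s)
  simpa [Function.comp_def] using this

theorem var_const_fst (x₀ : X) (g : ℝ → Y) (C : ℝ≥0) (hg : LipschitzWith C g)
    {a b : ℝ} (hab : a ≤ b) :
    @eVariationOn _ _ _ (@PseudoMetricSpace.toPseudoEMetricSpace _
      (sumMetric X Y).toPseudoMetricSpace) (fun u => ((x₀, g u) : X × Y)) (Set.Icc a b)
      ≤ C * ENNReal.ofReal (b - a) := by
  have hΦ : @LipschitzWith ℝ (X × Y) _ (@PseudoMetricSpace.toPseudoEMetricSpace _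
      (sumMetric X Y).toPseudoMetricSpace) C (fun u => ((x₀, g u) : X × Y)) := by
    apply @LipschitzWith.of_dist_le_mul _ _ _ (sumMetric X Y).toPseudoMetricSpace
    intro x y
    rw [sum_dist]
    simp only [dist_self, zero_add]
    exact hg.dist_le_mul x y
  have hid : eVariationOn (id : ℝ → ℝ) (Set.Icc a b) ≤ ENNReal.ofReal (b - a) := by
    have hm : MonotoneOn (id : ℝ → ℝ) (Set.Icc a b) := fun x _ y _ h => h
    have := hm.eVariationOn_le (a := a) (b := b) ⟨le_rfl, hab⟩ ⟨hab, le_rfl⟩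
    rwa [Set.inter_self, id_eq, id_eq] at this
  have hΦ' := @LipschitzWith.lipschitzOnWith ℝ (X × Y) _
      (@PseudoMetricSpace.toPseudoEMetricSpace _ (sumMetric X Y).toPseudoMetricSpace)
      C (fun u => ((x₀, g u) : X × Y)) Set.univ hΦ
  have hcomp := @LipschitzOnWith.comp_eVariationOn_le ℝ _ ℝ _ (X × Y)
    (@PseudoMetricSpace.toPseudoEMetricSpace _ (sumMetric X Y).toPseudoMetricSpace)
    (fun u => ((x₀, g u) : X × Y)) C Set.univ hΦ' id (Set.Icc a b)
    (Set.mapsTo_univ id (Set.Icc a b))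
  exact le_trans hcomp (mul_le_mul_right hid _)


theorem key_lower {T : ℝ} (hT : 0 ≤ T) (δ : ℝ → X × Y) :
    eVariationOn (fun u => (δ u).1) (Set.Icc 0 T) + edist (δ 0).2 (δ T).2 ≤
      @eVariationOn _ _ _ (@PseudoMetricSpace.toPseudoEMetricSpace _
        (sumMetric X Y).toPseudoMetricSpace) δ (Set.Icc 0 T) := by
  haveI : Nonempty {u : ℕ → ℝ // Monotone u ∧ ∀ i, u i ∈ Set.Icc 0 T} :=
    eVariationOn.nonempty_monotone_mem (Set.nonempty_Icc.2 hT)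
  rw [eVariationOn, ENNReal.iSup_add]
  refine iSup_le ?_
  rintro ⟨n, u, hu, us⟩
  dsimp only
  set v : ℕ → ℝ := fun i => if i = 0 then 0 else if i ≤ n + 1 then u (i - 1) else T with hv
  have v0 : v 0 = 0 := by simp [v]
  have vlast : v (n + 2) = T := by
    simp only [v]
    rw [if_neg (by omega), if_neg (by omega)]
  have vmid : ∀ i, 1 ≤ i → i ≤ n + 1 → v i = u (i - 1) := by
    intro i h1 h2
    simp only [v]
    rw [if_neg (by omega), if_pos h2]
  have hvmem : ∀ i, v i ∈ Set.Icc 0 T := by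
    intro i
    simp only [v]
    split_ifs with h1 h2
    · exact ⟨le_rfl, hT⟩
    · exact us _
    · exact ⟨hT, le_rfl⟩
  have hvmono : Monotone v := by
    apply monotone_nat_of_le_succ
    intro i
    rcases Nat.eq_zero_or_pos i with rfl | hi
    · rw [v0]
      exact (hvmem 1).1
    rcases le_or_gt (i + 1) (n + 1) with h | h
    · rw [vmid i hi (by omega), vmid (i + 1) (by omega) h]
      exact hu (by omega)
    rcases le_or_gt i (n + 1) with h' | h'
    · rw [vmid i hi h']
      have : v (i + 1) = T := by
        simp only [v]
        rw [if_neg (by omega), if_neg (by omega)]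
      rw [this]
      exact (us _).2
    · have e1 : v i = T := by simp only [v]; rw [if_neg (by omega), if_neg (by omega)]
      have e2 : v (i + 1) = T := by simp only [v]; rw [if_neg (by omega), if_neg (by omega)]
      rw [e1, e2]
  -- total sum over v bounds everything
  have hsum := @eVariationOn.sum_le _ _ _ (@PseudoMetricSpace.toPseudoEMetricSpace _
      (sumMetric X Y).toPseudoMetricSpace) δ _ (n + 2) v hvmono hvmem
  refine le_trans ?_ hsum
  have hsplit : ∀ j, @edist _ (@PseudoMetricSpace.toPseudoEMetricSpace _
      (sumMetric X Y).toPseudoMetricSpace).toEDist (δ (v (j+1))) (δ (v j))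
      = edist (δ (v (j+1))).1 (δ (v j)).1 + edist (δ (v (j+1))).2 (δ (v j)).2 :=
    fun j => sum_edist _ _
  calc (∑ i ∈ Finset.range n, edist ((δ (u (i+1))).1) ((δ (u i)).1)) + edist (δ 0).2 (δ T).2
      ≤ (∑ j ∈ Finset.range (n+2), edist ((δ (v (j+1))).1) ((δ (v j)).1))
        + ∑ j ∈ Finset.range (n+2), edist ((δ (v (j+1))).2) ((δ (v j)).2) := by
        gcongr
        · -- first coordinate: partition v refines u
          have hsub : Finset.Ico 1 (n+1) ⊆ Finset.range (n+2) := by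
            intro i hi
            simp only [Finset.mem_Ico] at hi
            simp only [Finset.mem_range]
            omega
          refine le_trans ?_ (Finset.sum_le_sum_of_subset hsub)
          rw [Finset.sum_Ico_eq_sum_range]
          simp only [Nat.add_sub_cancel]
          apply le_of_eq
          apply Finset.sum_congr rfl
          intro i hi
          simp only [Finset.mem_range] at hi
          rw [vmid (1 + i + 1) (by omega) (by omega), vmid (1 + i) (by omega) (by omega),
            show 1 + i + 1 - 1 = i + 1 from by omega, show 1 + i - 1 = i from by omega]
        · -- second coordinate: triangle inequality
          have := edist_le_range_sum_edist (fun j => (δ (v j)).2) (n + 2)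
          simp only [v0, vlast] at this
          refine le_trans this (le_of_eq ?_)
          apply Finset.sum_congr rfl
          intro i _
          exact edist_comm _ _
    _ = ∑ j ∈ Finset.range (n+2), @edist _ (@PseudoMetricSpace.toPseudoEMetricSpace _
          (sumMetric X Y).toPseudoMetricSpace).toEDist (δ (v (j+1))) (δ (v j)) := by
        rw [← Finset.sum_add_distrib]
        exact (Finset.sum_congr rfl fun j _ => (hsplit j).symm)


end Stmt19Aux

/-- For the sum metric `ρ` on `X × [0,1]`, the intrinsic distances satisfy
`ρ_I((x,s),(y,t)) = d_I(x,y) + |s − t|` in `[0,∞]`. -/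
theorem stmt19 {X : Type*} [MetricSpace X] (p q : X × (Set.Icc (0:ℝ) 1)) :
    @intrinsicDist _ (sumMetric X (Set.Icc (0:ℝ) 1)).toPseudoMetricSpace p q
      = intrinsicDist p.1 q.1 + ENNReal.ofReal |(p.2 : ℝ) - (q.2 : ℝ)| := by
  classical
  refine le_antisymm ?ub ?lb
  case lb =>
    -- lower bound
    refine le_iInf fun T => le_iInf fun hT => le_iInf fun δ => le_iInf fun hδc =>
      le_iInf fun h0 => le_iInf fun h1 => ?_
    have cont1 : ContinuousOn (fun u => (δ u).1) (Set.Icc 0 T) :=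
      Stmt19Aux.contOn_fst hδc
    have hd : intrinsicDist p.1 q.1 ≤ eVariationOn (fun u => (δ u).1) (Set.Icc 0 T) :=
      iInf_le_of_le T (iInf_le_of_le hT (iInf_le_of_le _ (iInf_le_of_le cont1
        (iInf_le_of_le (congrArg Prod.fst h0) (iInf_le_of_le (congrArg Prod.fst h1) le_rfl)))))
    have hce : ENNReal.ofReal |(p.2 : ℝ) - (q.2 : ℝ)| = edist (δ 0).2 (δ T).2 := by
      rw [h0, h1, Subtype.edist_eq, edist_dist, Real.dist_eq]
    calc intrinsicDist p.1 q.1 + ENNReal.ofReal |(p.2 : ℝ) - (q.2 : ℝ)|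
        ≤ eVariationOn (fun u => (δ u).1) (Set.Icc 0 T) + edist (δ 0).2 (δ T).2 := by
          rw [← hce]; exact add_le_add hd le_rfl
      _ ≤ _ := Stmt19Aux.key_lower hT δ
  case ub =>
    -- upper bound
    have hrw : intrinsicDist p.1 q.1 + ENNReal.ofReal |(p.2 : ℝ) - (q.2 : ℝ)|
        = ⨅ (T : ℝ) (_ : 0 ≤ T) (γ : ℝ → X) (_ : ContinuousOn γ (Set.Icc 0 T))
            (_ : γ 0 = p.1) (_ : γ T = q.1),
            (eVariationOn γ (Set.Icc 0 T) + ENNReal.ofReal |(p.2 : ℝ) - (q.2 : ℝ)|) := by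
      rw [intrinsicDist]
      simp only [ENNReal.iInf_add]
    rw [hrw]
    refine le_iInf fun T => le_iInf fun hT => le_iInf fun γ => le_iInf fun hγ =>
      le_iInf fun h0 => le_iInf fun h1 => ?_
    -- construct the product curve
    obtain ⟨ha0, ha1⟩ : (p.2 : ℝ) ∈ Set.Icc (0:ℝ) 1 := p.2.2
    obtain ⟨hb0, hb1⟩ : (q.2 : ℝ) ∈ Set.Icc (0:ℝ) 1 := q.2.2
    set θ : ℝ → ℝ := fun u => min 1 (max 0 (u - T)) with hθdef
    have hθ01 : ∀ u, 0 ≤ θ u ∧ θ u ≤ 1 := fun u =>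
      ⟨le_min zero_le_one (le_max_left _ _), min_le_left _ _⟩
    set val : ℝ → ℝ := fun u => (p.2 : ℝ) + θ u * ((q.2 : ℝ) - (p.2 : ℝ)) with hvaldef
    have hval01 : ∀ u, val u ∈ Set.Icc (0:ℝ) 1 := by
      intro u
      obtain ⟨h1', h2'⟩ := hθ01 u
      constructor <;> simp only [hvaldef] <;> nlinarith
    set g : ℝ → Set.Icc (0:ℝ) 1 := fun u => ⟨val u, hval01 u⟩ with hgdef
    set δ : ℝ → X × Set.Icc (0:ℝ) 1 := fun u => (γ (min u T), g u) with hδdef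
    -- θ is 1-Lipschitz
    have hsubl : LipschitzWith 1 (fun u : ℝ => u - T) := by
      apply LipschitzWith.of_dist_le_mul
      intro x y
      simp [Real.dist_eq, sub_sub_sub_cancel_right]
    have hθlip : LipschitzWith 1 θ := (hsubl.const_max 0).const_min 1
    have hθd : ∀ x y : ℝ, |θ x - θ y| ≤ |x - y| := by
      intro x y
      have := hθlip.dist_le_mul x y
      simpa [Real.dist_eq] using this
    have hglip : LipschitzWith ‖(q.2 : ℝ) - (p.2 : ℝ)‖₊ g := by
      apply LipschitzWith.of_dist_le_mul
      intro x y
      rw [Subtype.dist_eq]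
      show dist (val x) (val y) ≤ _
      rw [Real.dist_eq, Real.dist_eq, coe_nnnorm, Real.norm_eq_abs]
      have : val x - val y = (θ x - θ y) * ((q.2 : ℝ) - (p.2 : ℝ)) := by
        simp only [hvaldef]; ring
      rw [this, abs_mul, mul_comm (|θ x - θ y|)]
      exact mul_le_mul_of_nonneg_left (hθd x y) (abs_nonneg _)
    -- continuity of δ w.r.t. the sum metric
    have hγm : ContinuousOn (fun u => γ (min u T)) (Set.Icc 0 (T+1)) :=
      hγ.comp ((continuous_id.min continuous_const).continuousOn)
        (fun u hu => ⟨le_min hu.1 hT, min_le_right _ _⟩)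
    have hδprod : ContinuousOn δ (Set.Icc 0 (T+1)) :=
      hγm.prodMk hglip.continuous.continuousOn
    have hδc := Stmt19Aux.contOn_sum hδprod
    -- endpoints
    have hθ0 : θ 0 = 0 := by
      simp only [hθdef, zero_sub]
      rw [max_eq_left (neg_nonpos.2 hT), min_eq_right zero_le_one]
    have hθ1 : θ (T + 1) = 1 := by
      simp only [hθdef, add_sub_cancel_left]
      rw [max_eq_right zero_le_one, min_self]
    have hδ0 : δ 0 = p := by
      refine Prod.ext ?_ ?_
      · show γ (min 0 T) = p.1
        rw [min_eq_left hT, h0]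
      · refine Subtype.ext ?_
        show val 0 = (p.2 : ℝ)
        simp [hvaldef, hθ0]
    have hδ1 : δ (T + 1) = q := by
      refine Prod.ext ?_ ?_
      · show γ (min (T+1) T) = q.1
        rw [min_eq_right (by linarith), h1]
      · refine Subtype.ext ?_
        show val (T + 1) = (q.2 : ℝ)
        simp only [hvaldef, hθ1]
        ring
    -- the intrinsic distance is at most the variation of δ
    have step1 : @intrinsicDist _ (sumMetric X (Set.Icc (0:ℝ) 1)).toPseudoMetricSpace p q
        ≤ @eVariationOn _ _ _ (@PseudoMetricSpace.toPseudoEMetricSpace _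
            (sumMetric X (Set.Icc (0:ℝ) 1)).toPseudoMetricSpace) δ (Set.Icc 0 (T+1)) :=
      iInf_le_of_le (T+1) (iInf_le_of_le (by linarith) (iInf_le_of_le δ
        (iInf_le_of_le hδc (iInf_le_of_le hδ0 (iInf_le_of_le hδ1 le_rfl)))))
    -- split the variation
    have hsplit := @eVariationOn.Icc_add_Icc ℝ _ _ (@PseudoMetricSpace.toPseudoEMetricSpace _
        (sumMetric X (Set.Icc (0:ℝ) 1)).toPseudoMetricSpace) δ (Set.Icc 0 (T+1)) 0 T (T+1)
        hT (by linarith) ⟨hT, by linarith⟩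
    rw [Set.inter_eq_self_of_subset_right (Set.Icc_subset_Icc le_rfl (by linarith)),
      Set.inter_eq_self_of_subset_right (Set.Icc_subset_Icc hT le_rfl),
      Set.inter_self] at hsplit
    -- part A: variation on [0,T]
    have heqA : Set.EqOn δ ((fun x => ((x, p.2) : X × Set.Icc (0:ℝ) 1)) ∘ γ)
        (Set.Icc 0 T) := by
      intro u hu
      refine Prod.ext ?_ ?_
      · show γ (min u T) = γ u
        rw [min_eq_left hu.2]
      · refine Subtype.ext ?_
        show val u = (p.2 : ℝ)
        have : θ u = 0 := by
          simp only [hθdef]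
          rw [max_eq_left (by linarith [hu.2] : u - T ≤ 0), min_eq_right zero_le_one]
        simp [hvaldef, this]
    have partA : @eVariationOn _ _ _ (@PseudoMetricSpace.toPseudoEMetricSpace _
          (sumMetric X (Set.Icc (0:ℝ) 1)).toPseudoMetricSpace) δ (Set.Icc 0 T)
        ≤ eVariationOn γ (Set.Icc 0 T) :=
      le_trans (le_of_eq (@eVariationOn.eq_of_eqOn ℝ _ _
        (@PseudoMetricSpace.toPseudoEMetricSpace _
          (sumMetric X (Set.Icc (0:ℝ) 1)).toPseudoMetricSpace) _ _ _ heqA))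
        (Stmt19Aux.var_const_snd γ p.2 (Set.Icc 0 T))
    -- part B: variation on [T,T+1]
    have heqB : Set.EqOn δ (fun u => ((γ T, g u) : X × Set.Icc (0:ℝ) 1))
        (Set.Icc T (T+1)) := by
      intro u hu
      refine Prod.ext ?_ rfl
      show γ (min u T) = γ T
      rw [min_eq_right hu.1]
    have partB : @eVariationOn _ _ _ (@PseudoMetricSpace.toPseudoEMetricSpace _
          (sumMetric X (Set.Icc (0:ℝ) 1)).toPseudoMetricSpace) δ (Set.Icc T (T+1))
        ≤ ENNReal.ofReal |(p.2 : ℝ) - (q.2 : ℝ)| := by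
      refine le_trans (le_of_eq (@eVariationOn.eq_of_eqOn ℝ _ _
        (@PseudoMetricSpace.toPseudoEMetricSpace _
          (sumMetric X (Set.Icc (0:ℝ) 1)).toPseudoMetricSpace) _ _ _ heqB)) ?_
      refine le_trans (Stmt19Aux.var_const_fst (γ T) g _ hglip (by linarith : T ≤ T + 1)) ?_
      rw [add_sub_cancel_left, ENNReal.ofReal_one, mul_one, ← enorm_eq_nnnorm, ← ofReal_norm,
        Real.norm_eq_abs, abs_sub_comm]
    exact le_trans step1 (le_trans (le_of_eq hsplit.symm) (add_le_add partA partB))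
end
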